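/- arXiv:1912.04881 — 6 statements merged into one kernel-verified Lean document; each statement's English description precedes it below -/
import Mathlib

section
/- For all t ≥ 0 and all indices 1 ≤ n, m ≤ N, the (n,m) entry of the matrix exponential e^{At} equals (1/N) · Σ_{k=0}^{N−1} γ_k^{n−m} e^{ω_k t}. -/
open Matrix Complex Finset

noncomputable section

/-- The N×N matrix with -1 on the diagonal and 1 on the (cyclic) superdiagonal. -/
def ringMat (N : ℕ) : Matrix (Fin N) (Fin N) ℝ :=
  fun n m => if (m : ℕ) = (n : ℕ) then -1 else if (m : ℕ) = ((n : ℕ) + 1) % N then 1 else 0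

/-- γ_k = e^{2πik/N} -/
def gam (N k : ℕ) : ℂ := Complex.exp (2 * Real.pi * Complex.I * k / N)

lemma gam_one_pow (N k : ℕ) : gam N 1 ^ k = gam N k := by
  unfold gam
  rw [← Complex.exp_nat_mul]
  congr 1
  push_cast
  ring

lemma gam_ne_zero (N k : ℕ) : gam N k ≠ 0 := Complex.exp_ne_zero _

lemma gam_prim (N : ℕ) (hN : N ≠ 0) : IsPrimitiveRoot (gam N 1) N := by
  have := Complex.isPrimitiveRoot_exp N hN
  convert this using 2
  unfold gam
  push_cast
  ring_nf

lemma gam_pow_N (N : ℕ) (hN : N ≠ 0) : gam N 1 ^ N = 1 := (gam_prim N hN).pow_eq_one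

lemma gam_pow_congr (N : ℕ) (hN : N ≠ 0) {a b : ℕ} (h : a % N = b % N) :
    gam N 1 ^ a = gam N 1 ^ b := by
  conv_lhs => rw [← Nat.div_add_mod a N]
  conv_rhs => rw [← Nat.div_add_mod b N]
  rw [h, pow_add, pow_add, pow_mul, pow_mul, gam_pow_N N hN, one_pow, one_pow]

lemma gam_filter (N : ℕ) (hN : N ≠ 0) (r : ℤ) :
    ∑ k ∈ Finset.range N, gam N 1 ^ ((k : ℤ) * r) = if (N : ℤ) ∣ r then (N : ℂ) else 0 := by
  have hsum : ∀ k ∈ Finset.range N, gam N 1 ^ ((k : ℤ) * r) = (gam N 1 ^ r) ^ k := by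
    intro k _
    rw [mul_comm, _root_.zpow_mul, zpow_natCast]
  rw [Finset.sum_congr rfl hsum]
  by_cases hdvd : (N : ℤ) ∣ r
  · rw [if_pos hdvd]
    have h1 : gam N 1 ^ r = 1 := ((gam_prim N hN).zpow_eq_one_iff_dvd r).mpr hdvd
    simp [h1]
  · rw [if_neg hdvd]
    have h1 : gam N 1 ^ r ≠ 1 := fun h => hdvd (((gam_prim N hN).zpow_eq_one_iff_dvd r).mp h)
    rw [geom_sum_eq h1]
    have : (gam N 1 ^ r) ^ N = 1 := by
      rw [← zpow_natCast, ← _root_.zpow_mul, mul_comm, _root_.zpow_mul, zpow_natCast, gam_pow_N N hN, _root_.one_zpow]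
    rw [this, sub_self, zero_div]

def Uf (N : ℕ) : Matrix (Fin N) (Fin N) ℂ := fun n k => gam N 1 ^ ((n : ℕ) * (k : ℕ))
def Vf (N : ℕ) : Matrix (Fin N) (Fin N) ℂ :=
  fun k m => (N : ℂ)⁻¹ * gam N 1 ^ (-(((k : ℕ) * (m : ℕ) : ℕ) : ℤ))

lemma UV (N : ℕ) (hN : N ≠ 0) : Uf N * Vf N = 1 := by
  have hNz : (N : ℂ) ≠ 0 := Nat.cast_ne_zero.mpr hN
  ext n m
  rw [Matrix.mul_apply, Matrix.one_apply]
  have hterm : ∀ k : Fin N, Uf N n k * Vf N k m =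
      (N : ℂ)⁻¹ * gam N 1 ^ ((k : ℤ) * ((n : ℤ) - (m : ℤ))) := by
    intro k
    unfold Uf Vf
    rw [← zpow_natCast (gam N 1) ((n : ℕ) * (k : ℕ))]
    rw [mul_left_comm, ← zpow_add₀ (gam_ne_zero N 1)]
    congr 1
    push_cast
    ring
  rw [Finset.sum_congr rfl (fun k _ => hterm k), ← Finset.mul_sum]
  rw [Fin.sum_univ_eq_sum_range (fun k => gam N 1 ^ ((k : ℤ) * ((n : ℤ) - (m : ℤ))))]
  rw [gam_filter N hN]
  have hdvd : (N : ℤ) ∣ ((n : ℤ) - (m : ℤ)) ↔ n = m := by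
    constructor
    · intro h
      have h0 := Int.eq_zero_of_abs_lt_dvd h (by
        have := n.isLt; have := m.isLt
        rw [abs_lt]
        constructor <;> [skip; skip] <;> push_cast <;> omega)
      have : (n : ℤ) = (m : ℤ) := by omega
      exact Fin.ext (by exact_mod_cast this)
    · rintro rfl; simp
  by_cases h : n = m
  · rw [if_pos (hdvd.mpr h), if_pos h, inv_mul_cancel₀ hNz]
  · rw [if_neg (fun hd => h (hdvd.mp hd)), if_neg h, mul_zero]

lemma AU (N : ℕ) (hN : 2 ≤ N) :
    (ringMat N).map Complex.ofReal * Uf N =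
      Uf N * Matrix.diagonal (fun k : Fin N => gam N (k : ℕ) - 1) := by
  have hN0 : N ≠ 0 := by omega
  ext n k
  rw [Matrix.mul_apply, Matrix.mul_diagonal]
  set n' : Fin N := ⟨((n : ℕ) + 1) % N, Nat.mod_lt _ (by omega)⟩ with hn'
  have hne : n' ≠ n := by
    intro h
    have h2 : ((n : ℕ) + 1) % N = (n : ℕ) := congrArg Fin.val h
    have hlt := n.isLt
    rcases Nat.lt_or_ge ((n : ℕ) + 1) N with h1 | h1
    · rw [Nat.mod_eq_of_lt h1] at h2; omega
    · have h3 : (n : ℕ) + 1 = N := by omega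
      rw [h3, Nat.mod_self] at h2; omega
  have hterm : ∀ j : Fin N, ((ringMat N n j : ℝ) : ℂ) * Uf N j k =
      (if j = n then -Uf N n k else 0) + (if j = n' then Uf N n' k else 0) := by
    intro j
    by_cases h1 : (j : ℕ) = (n : ℕ)
    · have hj : j = n := Fin.ext h1
      have h2 : ¬(j = n') := fun h => hne (h.symm.trans hj)
      rw [if_pos hj, if_neg h2, add_zero]
      simp only [ringMat]
      rw [if_pos h1, hj]
      push_cast; ring
    · have hc1 : ¬(j = n) := fun hh => h1 (congrArg Fin.val hh)
      by_cases h2 : (j : ℕ) = ((n : ℕ) + 1) % N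
      · have hj : j = n' := Fin.ext h2
        rw [if_neg hc1, if_pos hj, zero_add]
        simp only [ringMat]
        rw [if_neg h1, if_pos h2, hj]
        push_cast; ring
      · have hc2 : ¬(j = n') := fun hh => h2 (congrArg Fin.val hh)
        rw [if_neg hc1, if_neg hc2, add_zero]
        simp only [ringMat]
        rw [if_neg h1, if_neg h2]
        push_cast; ring
  simp only [Matrix.map_apply]
  rw [Finset.sum_congr rfl (fun j _ => hterm j), Finset.sum_add_distrib,
      Finset.sum_ite_eq' Finset.univ n, Finset.sum_ite_eq' Finset.univ n']
  simp only [Finset.mem_univ, if_pos]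
  have hU : Uf N n' k = gam N (k : ℕ) * Uf N n k := by
    unfold Uf
    rw [← gam_one_pow N (k : ℕ), ← pow_add]
    apply gam_pow_congr N hN0
    show (((n : ℕ) + 1) % N * (k : ℕ)) % N = ((k : ℕ) + (n : ℕ) * (k : ℕ)) % N
    have h3 : (k : ℕ) + (n : ℕ) * (k : ℕ) = ((n : ℕ) + 1) * (k : ℕ) := by ring
    rw [h3]
    exact (Nat.mod_modEq ((n : ℕ) + 1) N).mul_right (k : ℕ)
  rw [hU]; ring

/-- for all t ≥ 0 and indices n, m, the (n,m) entry of e^{At} equals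
(1/N) Σ_{k=0}^{N-1} γ_k^{n-m} e^{ω_k t} with ω_k = γ_k - 1. -/
theorem stmt1 (N : ℕ) (hN : 2 ≤ N) :
    ∀ t : ℝ, 0 ≤ t → ∀ n m : Fin N,
      ((NormedSpace.exp (t • ringMat N)) n m : ℂ) =
        (N : ℂ)⁻¹ * ∑ k ∈ Finset.range N,
          gam N k ^ ((n : ℤ) - (m : ℤ)) * Complex.exp ((gam N k - 1) * t) := by
  intro t ht n m
  have hN0 : N ≠ 0 := by omega
  have hUV := UV N hN0
  have hVU : Vf N * Uf N = 1 := mul_eq_one_comm.mp hUV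
  let Uu : (Matrix (Fin N) (Fin N) ℂ)ˣ := ⟨Uf N, Vf N, hUV, hVU⟩
  have hA : (ringMat N).map Complex.ofReal =
      Uf N * Matrix.diagonal (fun k : Fin N => gam N (k : ℕ) - 1) * Vf N := by
    calc (ringMat N).map Complex.ofReal
        = (ringMat N).map Complex.ofReal * (Uf N * Vf N) := by rw [hUV, mul_one]
      _ = (ringMat N).map Complex.ofReal * Uf N * Vf N := by rw [mul_assoc]
      _ = _ := by rw [AU N hN]
  -- exponential commutes with entrywise coercion
  have hmap : (NormedSpace.exp (t • ringMat N)).map Complex.ofReal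
      = NormedSpace.exp (t • (ringMat N).map Complex.ofReal) := by
    letI : SeminormedRing (Matrix (Fin N) (Fin N) ℝ) := Matrix.linftyOpSemiNormedRing
    letI : NormedRing (Matrix (Fin N) (Fin N) ℝ) := Matrix.linftyOpNormedRing
    letI : NormedAlgebra ℝ (Matrix (Fin N) (Fin N) ℝ) := Matrix.linftyOpNormedAlgebra
    letI : NormedAlgebra ℚ (Matrix (Fin N) (Fin N) ℝ) := Matrix.linftyOpNormedAlgebra
    letI : SeminormedRing (Matrix (Fin N) (Fin N) ℂ) := Matrix.linftyOpSemiNormedRing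
    letI : NormedRing (Matrix (Fin N) (Fin N) ℂ) := Matrix.linftyOpNormedRing
    letI : NormedAlgebra ℝ (Matrix (Fin N) (Fin N) ℂ) := Matrix.linftyOpNormedAlgebra
    letI : NormedAlgebra ℚ (Matrix (Fin N) (Fin N) ℂ) := Matrix.linftyOpNormedAlgebra
    have hcont : Continuous (fun M : Matrix (Fin N) (Fin N) ℝ => M.map Complex.ofReal) :=
      continuous_id.matrix_map Complex.continuous_ofReal
    have h1 := NormedSpace.map_exp
      (Complex.ofRealHom.mapMatrix : Matrix (Fin N) (Fin N) ℝ →+* Matrix (Fin N) (Fin N) ℂ)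
      hcont (t • ringMat N)
    have hfx : Complex.ofRealHom.mapMatrix (t • ringMat N)
        = t • (ringMat N).map Complex.ofReal := by
      ext i j
      simp [RingHom.mapMatrix_apply, Matrix.map_apply, Matrix.smul_apply, Complex.real_smul]
    calc (NormedSpace.exp (t • ringMat N)).map Complex.ofReal
        = Complex.ofRealHom.mapMatrix (NormedSpace.exp (t • ringMat N)) := rfl
      _ = NormedSpace.exp (Complex.ofRealHom.mapMatrix (t • ringMat N)) := h1
      _ = NormedSpace.exp (t • (ringMat N).map Complex.ofReal) := by rw [hfx]
      _ = NormedSpace.exp (t • (ringMat N).map Complex.ofReal) := by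
            rfl
  have hsmul : t • ((ringMat N).map Complex.ofReal)
      = (Uu : Matrix (Fin N) (Fin N) ℂ) * Matrix.diagonal (fun k : Fin N => t • (gam N (k : ℕ) - 1)) * ((Uu⁻¹ : (Matrix (Fin N) (Fin N) ℂ)ˣ) : Matrix (Fin N) (Fin N) ℂ) := by
    rw [hA, ← smul_mul_assoc, ← mul_smul_comm]
    congr 1
    show Uf N * (t • Matrix.diagonal fun k : Fin N => gam N (k : ℕ) - 1) = _
    congr 1
    ext i j
    by_cases h : i = j <;> simp [Matrix.diagonal, h]
  have hexp : NormedSpace.exp (t • (ringMat N).map Complex.ofReal)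
      = (Uu : Matrix (Fin N) (Fin N) ℂ) * Matrix.diagonal (fun k : Fin N =>
          Complex.exp ((gam N (k : ℕ) - 1) * t)) * ((Uu⁻¹ : (Matrix (Fin N) (Fin N) ℂ)ˣ) : Matrix (Fin N) (Fin N) ℂ) := by
    rw [hsmul, Matrix.exp_units_conj Uu, Matrix.exp_diagonal]
    have hd : NormedSpace.exp (fun k : Fin N => t • (gam N (k : ℕ) - 1))
        = fun k : Fin N => Complex.exp ((gam N (k : ℕ) - 1) * t) := by
      funext k
      rw [Pi.coe_exp, ← Complex.exp_eq_exp_ℂ]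
      congr 1
      rw [Complex.real_smul]; ring
    rw [hd]
  have h0 : ((NormedSpace.exp (t • ringMat N)) n m : ℂ)
      = ((NormedSpace.exp (t • ringMat N)).map Complex.ofReal) n m := rfl
  rw [h0, hmap, hexp]
  have hcoe : (Uu : Matrix (Fin N) (Fin N) ℂ) = Uf N := rfl
  have hcoe2 : ((Uu⁻¹ : (Matrix (Fin N) (Fin N) ℂ)ˣ) : Matrix (Fin N) (Fin N) ℂ) = Vf N := rfl
  rw [hcoe, hcoe2, Matrix.mul_apply]
  simp only [Matrix.mul_diagonal]
  rw [← Fin.sum_univ_eq_sum_range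
    (fun k => gam N k ^ ((n : ℤ) - (m : ℤ)) * Complex.exp ((gam N k - 1) * t)) N,
    Finset.mul_sum]
  apply Finset.sum_congr rfl
  intro k _
  unfold Uf Vf
  have hz : gam N (k : ℕ) ^ ((n : ℤ) - (m : ℤ))
      = (gam N 1) ^ ((((n : ℕ) * (k : ℕ) : ℕ)) : ℤ) * (gam N 1) ^ (-((((k : ℕ) * (m : ℕ) : ℕ)) : ℤ)) := by
    rw [← gam_one_pow N (k : ℕ), ← zpow_natCast (gam N 1) (k : ℕ), ← _root_.zpow_mul,
      ← zpow_add₀ (gam_ne_zero N 1)]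
    congr 1
    push_cast
    ring
  rw [hz, zpow_natCast]
  ring
end
end

section
/- For every y ∈ ℝ^N and every t ≥ 0, ‖ e^{At} y − ȳ·(1,…,1)^⊤ ‖ ≤ √N · ‖y‖ · e^{−2 sin²(π/N) t}, where ȳ = (1/N) Σ_{k=1}^{N} y_k and ‖·‖ denotes the Euclidean norm on ℝ^N. -/
open Matrix Complex Finset

noncomputable section

variable {N : ℕ}

open Fin.NatCast


def shiftMat (N : ℕ) [NeZero N] : Matrix (Fin N) (Fin N) ℝ :=
  fun n m => if m = n + 1 then 1 else 0

lemma shiftMat_pow [NeZero N] (k : ℕ) :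
    (shiftMat N) ^ k = fun n m => if m = n + (k : Fin N) then (1:ℝ) else 0 := by
  induction k with
  | zero => ext n m; simp [Matrix.one_apply, eq_comm]
  | succ k ih =>
    ext n m
    rw [pow_succ, ih]
    refine (Matrix.mul_apply (M := fun n m => if m = n + (k : Fin N) then (1:ℝ) else 0)
      (N := shiftMat N)).trans ?_
    rw [Finset.sum_eq_single (n + (k : Fin N))]
    · simp [shiftMat, Nat.cast_add, add_assoc]
    · intro b _ hb; simp [hb]
    · simp

lemma ringMat_eq (hN : 2 ≤ N) : haveI : NeZero N := ⟨by omega⟩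
    ringMat N = shiftMat N - 1 := by
  haveI : NeZero N := ⟨by omega⟩
  ext n m
  have h1v : ((1 : Fin N) : ℕ) = 1 := by
    rw [Fin.val_one']; exact Nat.mod_eq_of_lt (by omega)
  have h1 : m = n + 1 ↔ (m : ℕ) = ((n : ℕ) + 1) % N := by
    rw [Fin.ext_iff, Fin.val_add, h1v]
  have hne : ((n : ℕ) + 1) % N ≠ (n : ℕ) := by
    intro h
    have hn := n.isLt
    rcases lt_or_eq_of_le (Nat.succ_le_of_lt hn) with h'|h'
    · rw [Nat.mod_eq_of_lt h'] at h; omega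
    · rw [show (n:ℕ)+1 = N from h', Nat.mod_self] at h; omega
  simp only [ringMat, shiftMat, Matrix.sub_apply, Matrix.one_apply, h1, Fin.ext_iff, eq_comm (a := (n:ℕ))]
  by_cases h : (m:ℕ) = (n:ℕ) <;> by_cases h' : (m : ℕ) = ((n : ℕ) + 1) % N <;>
    simp_all

lemma hasSum_exp_mulVec (hN : 2 ≤ N) (t : ℝ) (y : Fin N → ℝ) (i : Fin N) :
    haveI : NeZero N := ⟨by omega⟩
    HasSum (fun k : ℕ => t ^ k / (k.factorial : ℝ) * y (i + (k : Fin N)))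
      (Real.exp t * (NormedSpace.exp (t • ringMat N)).mulVec y i) := by
  haveI : NeZero N := ⟨by omega⟩
  letI : SeminormedRing (Matrix (Fin N) (Fin N) ℝ) := Matrix.linftyOpSemiNormedRing
  letI : NormedRing (Matrix (Fin N) (Fin N) ℝ) := Matrix.linftyOpNormedRing
  letI : NormedAlgebra ℝ (Matrix (Fin N) (Fin N) ℝ) := Matrix.linftyOpNormedAlgebra
  -- decompose the exponential
  have hA : t • ringMat N = (-t) • (1 : Matrix (Fin N) (Fin N) ℝ) + t • shiftMat N := by
    rw [ringMat_eq hN]; module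
  have hcomm : Commute ((-t) • (1 : Matrix (Fin N) (Fin N) ℝ)) (t • shiftMat N) :=
    ((Commute.one_left _).smul_left _).smul_right _
  have h1 : (-t) • (1 : Matrix (Fin N) (Fin N) ℝ) = algebraMap ℝ _ (-t) := by
    rw [Algebra.algebraMap_eq_smul_one]
  have hexp : NormedSpace.exp (t • ringMat N)
      = Real.exp (-t) • NormedSpace.exp (t • shiftMat N) := by
    have h2 : NormedSpace.exp (algebraMap ℝ (Matrix (Fin N) (Fin N) ℝ) (-t))
        = algebraMap ℝ _ (Real.exp (-t)) := by
      rw [Real.exp_eq_exp_ℝ]; exact (NormedSpace.algebraMap_exp_comm (-t)).symm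
    rw [hA, Matrix.exp_add_of_commute _ _ hcomm, h1, h2, Algebra.algebraMap_eq_smul_one,
      smul_one_mul]
  -- the entry/mulVec continuous linear map
  let φlin : Matrix (Fin N) (Fin N) ℝ →ₗ[ℝ] ℝ :=
    { toFun := fun M => M.mulVec y i
      map_add' := fun M₁ M₂ => by simp [Matrix.add_mulVec]
      map_smul' := fun c M => by simp [Matrix.smul_mulVec] }
  let φ : Matrix (Fin N) (Fin N) ℝ →L[ℝ] ℝ := LinearMap.toContinuousLinearMap φlin
  have hs := (NormedSpace.exp_series_hasSum_exp' (𝕂 := ℝ) (t • shiftMat N)).mapL φ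
  have hterm : ∀ k : ℕ, φ (((k.factorial : ℝ))⁻¹ • (t • shiftMat N) ^ k)
      = t ^ k / (k.factorial : ℝ) * y (i + (k : Fin N)) := by
    intro k
    have hpow : (t • shiftMat N) ^ k = t ^ k • (shiftMat N) ^ k := smul_pow t _ k
    have hmv : ((shiftMat N) ^ k).mulVec y i = y (i + (k : Fin N)) := by
      rw [shiftMat_pow]
      simp [Matrix.mulVec, dotProduct, ite_mul]
    have hφ : ∀ M : Matrix (Fin N) (Fin N) ℝ, φ M = M.mulVec y i := fun _ => rfl
    rw [φ.map_smul, hφ, hpow, Matrix.smul_mulVec]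
    simp only [Pi.smul_apply, hmv, smul_eq_mul]
    ring
  rw [hexp, Matrix.smul_mulVec]
  simp only [Pi.smul_apply, smul_eq_mul, ← mul_assoc, ← Real.exp_add]
  simp only [add_neg_cancel, Real.exp_zero, one_mul]
  have : φ (NormedSpace.exp (t • shiftMat N)) = (NormedSpace.exp (t • shiftMat N)).mulVec y i := rfl
  rw [← this]
  exact hs.congr_fun fun k => (hterm k).symm


def omg (N : ℕ) : ℂ := Complex.exp (2 * ↑Real.pi * I / N)

lemma omg_ne (N : ℕ) : omg N ≠ 0 := Complex.exp_ne_zero _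

lemma omg_prim (hN : N ≠ 0) : IsPrimitiveRoot (omg N) N := Complex.isPrimitiveRoot_exp N hN

lemma omg_geom (hN : N ≠ 0) (d : ℤ) :
    ∑ j ∈ Finset.range N, (omg N) ^ ((j : ℤ) * d) = if (N : ℤ) ∣ d then (N : ℂ) else 0 := by
  have hrw : ∀ j ∈ Finset.range N, (omg N) ^ ((j:ℤ) * d) = ((omg N) ^ d) ^ j := by
    intro j _
    rw [mul_comm, _root_.zpow_mul, zpow_natCast]
  rw [Finset.sum_congr rfl hrw]
  split_ifs with h
  · have h1 : (omg N) ^ d = 1 := ((omg_prim hN).zpow_eq_one_iff_dvd d).mpr h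
    simp [h1]
  · have h1 : (omg N) ^ d ≠ 1 := fun hc => h (((omg_prim hN).zpow_eq_one_iff_dvd d).mp hc)
    rw [geom_sum_eq h1]
    have h2 : ((omg N) ^ d) ^ N = 1 := by
      rw [← zpow_natCast, ← _root_.zpow_mul, mul_comm, _root_.zpow_mul, zpow_natCast,
        (omg_prim hN).pow_eq_one, _root_.one_zpow]
    rw [h2, sub_self, zero_div]

lemma dvd_iff_fin [NeZero N] (k : ℕ) (r : Fin N) :
    (N : ℤ) ∣ (k : ℤ) - (r : ℤ) ↔ r = (k : Fin N) := by
  rw [← Nat.modEq_iff_dvd]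
  constructor
  · intro h
    have h2 : (r : ℕ) % N = k % N := h
    rw [Nat.mod_eq_of_lt r.isLt] at h2
    exact Fin.ext (by rw [Fin.val_natCast]; exact h2)
  · intro h
    have h2 : (r : ℕ) = k % N := by rw [h, Fin.val_natCast]
    show (r : ℕ) % N = k % N
    rw [Nat.mod_eq_of_lt r.isLt, h2]

lemma dvd_iff_fin2 [NeZero N] (r s : Fin N) :
    (N : ℤ) ∣ (s : ℤ) - (r : ℤ) ↔ r = s := by
  have := dvd_iff_fin (s : ℕ) r
  rwa [Fin.cast_val_eq_self] at this

lemma cos_bound (hN : 2 ≤ N) (j : ℕ) (hj1 : 1 ≤ j) (hj2 : j ≤ N - 1) :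
    Real.cos (2 * Real.pi * j / N) ≤ Real.cos (2 * Real.pi / N) := by
  have hπ := Real.pi_pos
  have hN0 : (0:ℝ) < N := by positivity
  have hjr : (1:ℝ) ≤ (j:ℝ) := by exact_mod_cast hj1
  have hjr2 : (j:ℝ) ≤ (N:ℝ) - 1 := by
    have : (j:ℝ) ≤ ((N - 1 : ℕ):ℝ) := by exact_mod_cast hj2
    rw [Nat.cast_sub (by omega)] at this; simpa using this
  set x := 2 * Real.pi * j / N with hx
  have hx1 : 2 * Real.pi / N ≤ x := by
    have e1 : x - 2 * Real.pi / N = 2 * Real.pi * ((j:ℝ) - 1) / N := by rw [hx]; ring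
    have e2 : 0 ≤ 2 * Real.pi * ((j:ℝ) - 1) / N := by
      apply div_nonneg ?_ hN0.le; nlinarith
    linarith
  have hx2 : x ≤ 2 * Real.pi - 2 * Real.pi / N := by
    have e1 : 2 * Real.pi - 2 * Real.pi / N - x = 2 * Real.pi * (((N:ℝ) - 1) - j) / N := by
      rw [hx]; field_simp
    have e2 : 0 ≤ 2 * Real.pi * (((N:ℝ) - 1) - j) / N := by
      apply div_nonneg ?_ hN0.le; nlinarith
    linarith
  rcases le_or_gt x Real.pi with h | h
  · exact Real.cos_le_cos_of_nonneg_of_le_pi (by positivity) h hx1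
  · rw [← Real.cos_two_pi_sub x]
    apply Real.cos_le_cos_of_nonneg_of_le_pi (by positivity)
    · linarith
    · linarith

lemma fourier_identity [NeZero N] (t : ℝ) (w : Fin N → ℝ) (k : ℕ) :
    (∑ j : Fin N, ((N:ℂ)⁻¹ * ∑ r : Fin N, (w r : ℂ) * (omg N) ^ (-(((j:ℕ) * (r:ℕ) : ℕ) : ℤ)))
        * (((t:ℂ) * (omg N) ^ (j:ℕ)) ^ k / (k.factorial : ℂ)))
      = ((t ^ k / (k.factorial : ℝ) * w ((k : Fin N)) : ℝ) : ℂ) := by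
  have hN : N ≠ 0 := NeZero.ne N
  set ω := omg N with hωdef
  have hω0 : ω ≠ 0 := omg_ne N
  have hterm : ∀ j r : Fin N,
      ((w r : ℂ) * ω ^ (-(((j:ℕ) * (r:ℕ) : ℕ) : ℤ))) * (((t:ℂ) * ω ^ (j:ℕ)) ^ k / (k.factorial : ℂ))
      = ((w r:ℂ) * ((t:ℂ)^k / (k.factorial:ℂ))) * ω ^ ((j:ℤ) * ((k:ℤ) - (r:ℤ))) := by
    intro j r
    have he : ((j:ℤ) * ((k:ℤ) - (r:ℤ))) = (-(((j:ℕ) * (r:ℕ) : ℕ) : ℤ)) + (((j:ℕ) * k : ℕ) : ℤ) := by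
      push_cast; ring
    rw [he, zpow_add₀ hω0, zpow_natCast, pow_mul, mul_pow]
    ring
  calc (∑ j : Fin N, ((N:ℂ)⁻¹ * ∑ r : Fin N, (w r : ℂ) * ω ^ (-(((j:ℕ) * (r:ℕ) : ℕ) : ℤ)))
        * (((t:ℂ) * ω ^ (j:ℕ)) ^ k / (k.factorial : ℂ)))
      = ∑ j : Fin N, ∑ r : Fin N,
          (N:ℂ)⁻¹ * (((w r:ℂ) * ((t:ℂ)^k / (k.factorial:ℂ))) * ω ^ ((j:ℤ) * ((k:ℤ) - (r:ℤ)))) := by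
        refine Finset.sum_congr rfl fun j _ => ?_
        rw [Finset.mul_sum, Finset.sum_mul]
        refine Finset.sum_congr rfl fun r _ => ?_
        rw [← hterm j r]; ring
    _ = ∑ r : Fin N, (N:ℂ)⁻¹ * ((w r:ℂ) * ((t:ℂ)^k / (k.factorial:ℂ)))
          * ∑ j : Fin N, ω ^ ((j:ℤ) * ((k:ℤ) - (r:ℤ))) := by
        rw [Finset.sum_comm]
        refine Finset.sum_congr rfl fun r _ => ?_
        rw [Finset.mul_sum]
        refine Finset.sum_congr rfl fun j _ => ?_
        ring
    _ = ∑ r : Fin N, (N:ℂ)⁻¹ * ((w r:ℂ) * ((t:ℂ)^k / (k.factorial:ℂ)))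
          * (if r = (k : Fin N) then (N:ℂ) else 0) := by
        refine Finset.sum_congr rfl fun r _ => ?_
        congr 1
        rw [Fin.sum_univ_eq_sum_range (fun j : ℕ => ω ^ ((j:ℤ) * ((k:ℤ) - (r:ℤ)))) N,
          omg_geom hN]
        simp only [dvd_iff_fin]
    _ = ((t ^ k / (k.factorial : ℝ) * w ((k : Fin N)) : ℝ) : ℂ) := by
        simp only [mul_ite, mul_zero, Finset.sum_ite_eq' Finset.univ]
        simp only [Finset.mem_univ, if_true]
        have : ((N:ℂ)) ≠ 0 := Nat.cast_ne_zero.mpr hN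
        push_cast
        rw [mul_comm ((N:ℂ)⁻¹) _, mul_assoc, inv_mul_cancel₀ this, mul_one]
        ring

lemma omg_conj (N : ℕ) : (starRingEnd ℂ) (omg N) = (omg N)⁻¹ := by
  rw [omg, ← Complex.exp_conj, ← Complex.exp_neg]
  congr 1
  simp [map_div₀, Complex.conj_ofReal, map_ofNat]
  ring

lemma conj_omg_zpow (N : ℕ) (a : ℤ) : (starRingEnd ℂ) ((omg N) ^ a) = (omg N) ^ (-a) := by
  rw [map_zpow₀, omg_conj, _root_.inv_zpow, ← _root_.zpow_neg]

lemma parseval [NeZero N] (w : Fin N → ℝ) :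
    ∑ j : Fin N, ‖(N:ℂ)⁻¹ * ∑ r : Fin N, (w r : ℂ) * (omg N) ^ (-(((j:ℕ) * (r:ℕ) : ℕ) : ℤ))‖ ^ 2
      = (N:ℝ)⁻¹ * ∑ r : Fin N, w r ^ 2 := by
  have hN : N ≠ 0 := NeZero.ne N
  set ω := omg N with hωdef
  have hω0 : ω ≠ 0 := omg_ne N
  set D : Fin N → ℂ := fun j => (N:ℂ)⁻¹ * ∑ r : Fin N, (w r : ℂ) * ω ^ (-(((j:ℕ) * (r:ℕ) : ℕ) : ℤ)) with hD
  have hconj : ∀ j : Fin N, (starRingEnd ℂ) (D j)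
      = (N:ℂ)⁻¹ * ∑ s : Fin N, (w s : ℂ) * ω ^ ((((j:ℕ) * (s:ℕ) : ℕ)) : ℤ) := by
    intro j
    rw [hD]
    rw [_root_.map_mul, map_sum]
    congr 1
    · simp
    · refine Finset.sum_congr rfl fun s _ => ?_
      rw [_root_.map_mul, Complex.conj_ofReal, conj_omg_zpow, neg_neg]
  -- complex Parseval
  have hmain : ∑ j : Fin N, D j * (starRingEnd ℂ) (D j) = ((((N:ℝ)⁻¹ * ∑ r : Fin N, w r ^ 2 : ℝ)) : ℂ) := by
    have hterm : ∀ j : Fin N, D j * (starRingEnd ℂ) (D j)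
        = ∑ r : Fin N, ∑ s : Fin N,
            (N:ℂ)⁻¹ * (N:ℂ)⁻¹ * ((w r:ℂ) * (w s:ℂ)) * ω ^ ((j:ℤ) * ((s:ℤ) - (r:ℤ))) := by
      intro j
      rw [hconj, hD]
      rw [mul_mul_mul_comm, Finset.sum_mul_sum]
      rw [Finset.mul_sum]
      refine Finset.sum_congr rfl fun r _ => ?_
      rw [Finset.mul_sum]
      refine Finset.sum_congr rfl fun s _ => ?_
      have he : ((j:ℤ) * ((s:ℤ) - (r:ℤ))) = (-(((j:ℕ) * (r:ℕ) : ℕ) : ℤ)) + ((((j:ℕ) * (s:ℕ) : ℕ)) : ℤ) := by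
        push_cast; ring
      rw [he, zpow_add₀ hω0]
      ring
    rw [Finset.sum_congr rfl fun j _ => hterm j]
    rw [Finset.sum_comm]
    rw [Finset.sum_congr rfl fun r (_ : r ∈ Finset.univ) => Finset.sum_comm]
    have hNC : (N:ℂ) ≠ 0 := Nat.cast_ne_zero.mpr hN
    have step : ∀ r s : Fin N,
        (∑ j : Fin N, (N:ℂ)⁻¹ * (N:ℂ)⁻¹ * ((w r:ℂ) * (w s:ℂ)) * ω ^ ((j:ℤ) * ((s:ℤ) - (r:ℤ))))
        = (N:ℂ)⁻¹ * (N:ℂ)⁻¹ * ((w r:ℂ) * (w s:ℂ)) * (if r = s then (N:ℂ) else 0) := by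
      intro r s
      rw [← Finset.mul_sum]
      congr 1
      rw [Fin.sum_univ_eq_sum_range (fun j : ℕ => ω ^ ((j:ℤ) * ((s:ℤ) - (r:ℤ)))) N,
        omg_geom hN]
      simp only [dvd_iff_fin2]
    rw [Finset.sum_congr rfl fun r (_ : r ∈ Finset.univ) =>
      Finset.sum_congr rfl fun s (_ : s ∈ Finset.univ) => step r s]
    simp only [mul_ite, mul_zero]
    rw [Finset.sum_congr rfl fun r (_ : r ∈ Finset.univ) => Finset.sum_ite_eq Finset.univ r _]
    simp only [Finset.mem_univ, if_true]
    push_cast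
    rw [Finset.mul_sum]
    refine Finset.sum_congr rfl fun r _ => ?_
    field_simp
  have habs : ∀ j : Fin N, (‖D j‖ : ℝ) ^ 2 = (D j * (starRingEnd ℂ) (D j)).re := by
    intro j
    rw [Complex.mul_conj]
    simp [Complex.sq_norm]
  calc ∑ j : Fin N, ‖D j‖ ^ 2 = ∑ j : Fin N, (D j * (starRingEnd ℂ) (D j)).re := by
        exact Finset.sum_congr rfl fun j _ => habs j
    _ = (∑ j : Fin N, D j * (starRingEnd ℂ) (D j)).re := by rw [Complex.re_sum]
    _ = (N:ℝ)⁻¹ * ∑ r : Fin N, w r ^ 2 := by rw [hmain, Complex.ofReal_re]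

lemma key_bound (hN : 2 ≤ N) [NeZero N] (t : ℝ) (ht : 0 ≤ t) (w : Fin N → ℝ)
    (hw : ∑ r, w r = 0) (E : ℝ)
    (hE : HasSum (fun k : ℕ => t ^ k / (k.factorial : ℝ) * w ((k : Fin N))) E) :
    |E| ≤ Real.sqrt (∑ r, w r ^ 2) * Real.exp (t * Real.cos (2 * Real.pi / N)) := by
  have hNne : N ≠ 0 := NeZero.ne N
  set ω := omg N with hωdef
  have hω0 : ω ≠ 0 := omg_ne N
  set D : Fin N → ℂ := fun j => (N:ℂ)⁻¹ * ∑ r : Fin N, (w r : ℂ) * ω ^ (-(((j:ℕ) * (r:ℕ) : ℕ) : ℤ)) with hD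
  have hEc : HasSum (fun k : ℕ => (((t ^ k / (k.factorial : ℝ) * w ((k : Fin N))) : ℝ) : ℂ)) ((E : ℂ)) :=
    hE.mapL Complex.ofRealCLM
  have hexpj : ∀ j ∈ (Finset.univ : Finset (Fin N)),
      HasSum (fun k : ℕ => D j * (((t:ℂ) * ω ^ (j:ℕ)) ^ k / (k.factorial:ℂ)))
        (D j * Complex.exp ((t:ℂ) * ω ^ (j:ℕ))) := by
    intro j _
    have h := NormedSpace.expSeries_div_hasSum_exp ((t:ℂ) * ω ^ (j:ℕ))
    rw [← Complex.exp_eq_exp_ℂ] at h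
    exact h.mul_left (D j)
  have hT := hasSum_sum hexpj
  have hfun : ∀ k : ℕ, (∑ j : Fin N, D j * (((t:ℂ) * ω ^ (j:ℕ)) ^ k / (k.factorial:ℂ)))
      = (((t ^ k / (k.factorial : ℝ) * w ((k : Fin N))) : ℝ) : ℂ) := fun k => fourier_identity t w k
  have hEq : (E : ℂ) = ∑ j : Fin N, D j * Complex.exp ((t:ℂ) * ω ^ (j:ℕ)) :=
    hEc.unique (hT.congr_fun fun k => (hfun k).symm)
  have hD0 : D 0 = 0 := by
    rw [hD]
    simp only [Fin.val_zero, zero_mul, Nat.cast_zero, neg_zero, zpow_zero, mul_one,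
      ← Complex.ofReal_sum, hw, Complex.ofReal_zero, mul_zero]
  -- exponential factor
  have habsexp : ∀ j : Fin N, ‖Complex.exp ((t:ℂ) * ω ^ (j:ℕ))‖
      = Real.exp (t * Real.cos (2 * Real.pi * j / N)) := by
    intro j
    have hωj : ω ^ (j:ℕ) = Complex.exp (((2 * Real.pi * (j:ℕ) / N : ℝ) : ℂ) * I) := by
      rw [hωdef, omg, ← Complex.exp_nat_mul]
      congr 1
      push_cast
      ring
    have hre : ((t:ℂ) * ω ^ (j:ℕ)).re = t * Real.cos (2 * Real.pi * (j:ℕ) / N) := by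
      rw [hωj, Complex.mul_re, Complex.exp_ofReal_mul_I_re]
      simp
    rw [Complex.norm_exp, hre]
  have hcosb : ∀ j : Fin N, j ≠ 0 →
      Real.exp (t * Real.cos (2 * Real.pi * j / N)) ≤ Real.exp (t * Real.cos (2 * Real.pi / N)) := by
    intro j hj
    apply Real.exp_le_exp.mpr
    apply mul_le_mul_of_nonneg_left ?_ ht
    apply cos_bound hN
    · rcases Nat.eq_zero_or_pos (j : ℕ) with h | h
      · exact absurd (Fin.ext h) hj
      · exact h
    · have := j.isLt; omega
  -- main chain
  have hchain : ‖(E:ℂ)‖ ≤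
      (∑ j ∈ Finset.univ.erase (0 : Fin N), ‖D j‖)
        * Real.exp (t * Real.cos (2 * Real.pi / N)) := by
    rw [hEq, ← Finset.sum_erase_add Finset.univ _ (Finset.mem_univ (0 : Fin N)), hD0, zero_mul,
      add_zero]
    calc ‖∑ j ∈ Finset.univ.erase (0 : Fin N), D j * Complex.exp ((t:ℂ) * ω ^ (j:ℕ))‖
        ≤ ∑ j ∈ Finset.univ.erase (0 : Fin N), ‖D j * Complex.exp ((t:ℂ) * ω ^ (j:ℕ))‖ :=
          norm_sum_le _ _
      _ ≤ ∑ j ∈ Finset.univ.erase (0 : Fin N),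
            ‖D j‖ * Real.exp (t * Real.cos (2 * Real.pi / N)) := by
          refine Finset.sum_le_sum fun j hj => ?_
          rw [norm_mul, habsexp j]
          exact mul_le_mul_of_nonneg_left (hcosb j (Finset.ne_of_mem_erase hj))
            (norm_nonneg _)
      _ = (∑ j ∈ Finset.univ.erase (0 : Fin N), ‖D j‖)
            * Real.exp (t * Real.cos (2 * Real.pi / N)) := by
          rw [Finset.sum_mul]
  -- Cauchy-Schwarz and Parseval
  have hS0 : 0 ≤ ∑ j ∈ Finset.univ.erase (0 : Fin N), ‖D j‖ :=
    Finset.sum_nonneg fun j _ => norm_nonneg _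
  have hCS : (∑ j ∈ Finset.univ.erase (0 : Fin N), ‖D j‖) ^ 2
      ≤ ((N:ℝ) - 1) * ∑ j ∈ Finset.univ.erase (0 : Fin N), ‖D j‖ ^ 2 := by
    have h := Finset.sum_mul_sq_le_sq_mul_sq (Finset.univ.erase (0 : Fin N))
      (fun _ => (1:ℝ)) (fun j => ‖D j‖)
    have hcard : ((Finset.univ.erase (0 : Fin N)).card : ℝ) = (N:ℝ) - 1 := by
      rw [Finset.card_erase_of_mem (Finset.mem_univ _), Finset.card_univ, Fintype.card_fin]
      have : 1 ≤ N := by omega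
      push_cast [Nat.cast_sub this]
      ring
    simp only [one_mul, one_pow, Finset.sum_const, nsmul_eq_mul, mul_one] at h
    rwa [hcard] at h
  have hP2 : ∑ j ∈ Finset.univ.erase (0 : Fin N), ‖D j‖ ^ 2
      ≤ (N:ℝ)⁻¹ * ∑ r : Fin N, w r ^ 2 := by
    rw [← parseval w]
    exact Finset.sum_le_sum_of_subset_of_nonneg (Finset.subset_univ _)
      (fun j _ _ => by positivity)
  have hsum2 : (0:ℝ) ≤ ∑ r : Fin N, w r ^ 2 := Finset.sum_nonneg fun r _ => sq_nonneg _
  have hfactor : ((N:ℝ) - 1) * ((N:ℝ)⁻¹ * ∑ r : Fin N, w r ^ 2) ≤ ∑ r : Fin N, w r ^ 2 := by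
    have hN0 : (0:ℝ) < N := by positivity
    have h1 : ((N:ℝ) - 1) * (N:ℝ)⁻¹ ≤ 1 := by
      rw [sub_mul, mul_inv_cancel₀ hN0.ne']
      have : 0 ≤ (N:ℝ)⁻¹ := by positivity
      linarith
    calc ((N:ℝ) - 1) * ((N:ℝ)⁻¹ * ∑ r : Fin N, w r ^ 2)
        = (((N:ℝ) - 1) * (N:ℝ)⁻¹) * ∑ r : Fin N, w r ^ 2 := by ring
      _ ≤ 1 * ∑ r : Fin N, w r ^ 2 := mul_le_mul_of_nonneg_right h1 hsum2
      _ = ∑ r : Fin N, w r ^ 2 := one_mul _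
  have hDle : (∑ j ∈ Finset.univ.erase (0 : Fin N), ‖D j‖)
      ≤ Real.sqrt (∑ r : Fin N, w r ^ 2) := by
    rw [Real.le_sqrt hS0 hsum2]
    calc (∑ j ∈ Finset.univ.erase (0 : Fin N), ‖D j‖) ^ 2
        ≤ ((N:ℝ) - 1) * ∑ j ∈ Finset.univ.erase (0 : Fin N), ‖D j‖ ^ 2 := hCS
      _ ≤ ((N:ℝ) - 1) * ((N:ℝ)⁻¹ * ∑ r : Fin N, w r ^ 2) := by
          apply mul_le_mul_of_nonneg_left hP2
          have : (1:ℝ) ≤ N := by exact_mod_cast (by omega : 1 ≤ N)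
          linarith
      _ ≤ ∑ r : Fin N, w r ^ 2 := hfactor
  calc |E| = ‖(E:ℂ)‖ := (by simp)
    _ ≤ (∑ j ∈ Finset.univ.erase (0 : Fin N), ‖D j‖)
          * Real.exp (t * Real.cos (2 * Real.pi / N)) := hchain
    _ ≤ Real.sqrt (∑ r : Fin N, w r ^ 2) * Real.exp (t * Real.cos (2 * Real.pi / N)) :=
        mul_le_mul_of_nonneg_right hDle (Real.exp_nonneg _)

/-- for every y ∈ ℝ^N and t ≥ 0,
‖e^{At} y − ȳ·(1,…,1)ᵀ‖ ≤ √N ‖y‖ e^{−2 sin²(π/N) t}, Euclidean norms. -/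
theorem stmt2 (N : ℕ) (hN : 2 ≤ N) :
    ∀ y : Fin N → ℝ, ∀ t : ℝ, 0 ≤ t →
      Real.sqrt (∑ i, ((NormedSpace.exp (t • ringMat N)).mulVec y i
          - (N : ℝ)⁻¹ * ∑ k, y k) ^ 2) ≤
        Real.sqrt N * Real.sqrt (∑ i, (y i) ^ 2) *
          Real.exp (-(2 * Real.sin (Real.pi / N) ^ 2) * t) := by
  intro y t ht
  haveI : NeZero N := ⟨by omega⟩
  have hN0 : (0:ℝ) < N := by positivity
  set ybar : ℝ := (N : ℝ)⁻¹ * ∑ k, y k with hybar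
  set z : Fin N → ℝ := fun m => y m - ybar with hzdef
  have hy : ∑ m, y m = N * ybar := by rw [hybar]; field_simp
  have hzsum : ∑ m, z m = 0 := by
    rw [hzdef]
    rw [Finset.sum_sub_distrib, hy, Finset.sum_const, Finset.card_univ, Fintype.card_fin,
      nsmul_eq_mul]
    ring
  -- z-sum of squares vs y
  have hzsq : ∑ m, z m ^ 2 = ∑ m, y m ^ 2 - N * ybar ^ 2 := by
    have expand : ∀ m : Fin N, z m ^ 2 = y m ^ 2 - 2 * ybar * y m + ybar ^ 2 := fun m => by
      rw [hzdef]; ring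
    rw [Finset.sum_congr rfl fun m _ => expand m, Finset.sum_add_distrib,
      Finset.sum_sub_distrib, ← Finset.mul_sum, hy, Finset.sum_const, Finset.card_univ,
      Fintype.card_fin, nsmul_eq_mul]
    ring
  have hzsq_le : ∑ m, z m ^ 2 ≤ ∑ m, y m ^ 2 := by
    rw [hzsq]
    have : 0 ≤ (N:ℝ) * ybar ^ 2 := by positivity
    linarith
  have hzsq_nonneg : (0:ℝ) ≤ ∑ m, z m ^ 2 := Finset.sum_nonneg fun m _ => sq_nonneg _
  -- exponent identity
  have hexpid : Real.exp (-t) * Real.exp (t * Real.cos (2 * Real.pi / N))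
      = Real.exp (-(2 * Real.sin (Real.pi / N) ^ 2) * t) := by
    rw [← Real.exp_add]
    congr 1
    have hc : Real.cos (2 * Real.pi / N) = 1 - 2 * Real.sin (Real.pi / N) ^ 2 := by
      have h1 : 2 * Real.pi / N = 2 * (Real.pi / N) := by ring
      rw [h1, Real.cos_two_mul]
      have h2 := Real.sin_sq_add_cos_sq (Real.pi / N)
      linarith
    rw [hc]; ring
  -- per-component bound
  set B : ℝ := Real.sqrt (∑ m, z m ^ 2) * Real.exp (-(2 * Real.sin (Real.pi / N) ^ 2) * t)
    with hB
  have hBnn : 0 ≤ B := by rw [hB]; positivity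
  have hbound : ∀ i : Fin N,
      |(NormedSpace.exp (t • ringMat N)).mulVec y i - ybar| ≤ B := by
    intro i
    -- HasSum for the centered vector
    have hgeo : HasSum (fun k : ℕ => t ^ k / (k.factorial : ℝ) * ybar) (Real.exp t * ybar) := by
      have h := NormedSpace.expSeries_div_hasSum_exp t
      rw [← Real.exp_eq_exp_ℝ] at h
      exact h.mul_right ybar
    have hconst := hasSum_exp_mulVec hN t (fun _ => ybar) i
    have hconst2 : (NormedSpace.exp (t • ringMat N)).mulVec (fun _ => ybar) i = ybar := by
      have := hconst.unique hgeo
      exact mul_left_cancel₀ (Real.exp_ne_zero t) this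
    have hz2 := hasSum_exp_mulVec hN t z i
    have hmv : (NormedSpace.exp (t • ringMat N)).mulVec z i
        = (NormedSpace.exp (t • ringMat N)).mulVec y i - ybar := by
      have : z = y - (fun _ => ybar) := by funext m; rw [hzdef]; rfl
      rw [this, Matrix.mulVec_sub]
      simp [hconst2]
    rw [hmv] at hz2
    -- apply the key bound with w r := z (i + r)
    have hw : ∑ r : Fin N, z (i + r) = 0 := by
      rw [Fintype.sum_equiv (Equiv.addLeft i) _ z fun r => by simp]
      exact hzsum
    have hwsq : ∑ r : Fin N, z (i + r) ^ 2 = ∑ m, z m ^ 2 := by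
      exact Fintype.sum_equiv (Equiv.addLeft i) _ _ fun r => by simp
    have hkey := key_bound hN t ht (fun r => z (i + r)) hw
      (Real.exp t * ((NormedSpace.exp (t • ringMat N)).mulVec y i - ybar)) hz2
    rw [hwsq] at hkey
    rw [abs_mul, Real.abs_exp] at hkey
    have h3 : |(NormedSpace.exp (t • ringMat N)).mulVec y i - ybar|
        ≤ Real.exp (-t) * (Real.sqrt (∑ m, z m ^ 2) * Real.exp (t * Real.cos (2 * Real.pi / N))) := by
      rw [← mul_le_mul_iff_of_pos_left (Real.exp_pos t)]
      calc Real.exp t * |(NormedSpace.exp (t • ringMat N)).mulVec y i - ybar| ≤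
          Real.sqrt (∑ m, z m ^ 2) * Real.exp (t * Real.cos (2 * Real.pi / N)) := hkey
        _ = Real.exp t * (Real.exp (-t) * (Real.sqrt (∑ m, z m ^ 2)
              * Real.exp (t * Real.cos (2 * Real.pi / N)))) := by
            rw [← mul_assoc, ← mul_assoc, ← Real.exp_add]
            simp
    calc |(NormedSpace.exp (t • ringMat N)).mulVec y i - ybar| ≤ _ := h3
      _ = B := by rw [hB, ← hexpid]; ring
  -- sum up
  have hsum_le : ∑ i, ((NormedSpace.exp (t • ringMat N)).mulVec y i - ybar) ^ 2
      ≤ (N : ℝ) * B ^ 2 := by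
    calc ∑ i, ((NormedSpace.exp (t • ringMat N)).mulVec y i - ybar) ^ 2
        ≤ ∑ _i : Fin N, B ^ 2 := by
          refine Finset.sum_le_sum fun i _ => ?_
          rw [← _root_.sq_abs]
          exact pow_le_pow_left₀ (abs_nonneg _) (hbound i) 2
      _ = (N : ℝ) * B ^ 2 := by
          rw [Finset.sum_const, Finset.card_univ, Fintype.card_fin, nsmul_eq_mul]
  calc Real.sqrt (∑ i, ((NormedSpace.exp (t • ringMat N)).mulVec y i - ybar) ^ 2)
      ≤ Real.sqrt ((N : ℝ) * B ^ 2) := Real.sqrt_le_sqrt hsum_le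
    _ = Real.sqrt N * B := by
        rw [Real.sqrt_mul hN0.le, Real.sqrt_sq hBnn]
    _ ≤ Real.sqrt N * Real.sqrt (∑ i, (y i) ^ 2)
          * Real.exp (-(2 * Real.sin (Real.pi / N) ^ 2) * t) := by
        rw [hB, ← mul_assoc]
        apply mul_le_mul_of_nonneg_right ?_ (Real.exp_nonneg _)
        apply mul_le_mul_of_nonneg_left ?_ (Real.sqrt_nonneg _)
        exact Real.sqrt_le_sqrt hzsq_le
end
end

section
/- For all indices 1 ≤ n, m ≤ N, the (n,m) entry of e^{At} converges to 1/N as t → ∞. -/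
open Matrix Complex Finset Filter

noncomputable section

namespace RingAux

open ComplexConjugate

def zeta (N : ℕ) : ℂ := Complex.exp (2 * Real.pi * I / N)

variable {N : ℕ}

lemma hprim (hN : 2 ≤ N) : IsPrimitiveRoot (zeta N) N :=
  Complex.isPrimitiveRoot_exp N (by omega)

lemma zeta_pow_N (hN : 2 ≤ N) : zeta N ^ N = 1 := (hprim hN).pow_eq_one

lemma abs_zeta : ‖zeta N‖ = 1 := by
  have : (2 * Real.pi * I / N : ℂ) = ((2 * Real.pi / N : ℝ) : ℂ) * I := by
    push_cast; ring
  rw [zeta, this, Complex.norm_exp_ofReal_mul_I]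

lemma conj_pow_mul (hN : 2 ≤ N) (k : ℕ) : zeta N ^ k * conj (zeta N ^ k) = 1 := by
  rw [Complex.mul_conj, ← Complex.sq_norm]
  simp [map_pow, abs_zeta]

lemma pow_mod (hN : 2 ≤ N) (k : ℕ) : zeta N ^ k = zeta N ^ (k % N) := by
  conv_lhs => rw [← Nat.mod_add_div k N, pow_add, pow_mul, zeta_pow_N hN, one_pow, mul_one]

lemma pow_eq_pow_iff (hN : 2 ≤ N) {a b : ℕ} :
    zeta N ^ a = zeta N ^ b ↔ a % N = b % N := by
  constructor
  · intro h
    rw [pow_mod hN a, pow_mod hN b] at h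
    exact (hprim hN).pow_inj (Nat.mod_lt _ (by omega)) (Nat.mod_lt _ (by omega)) h
  · intro h; rw [pow_mod hN a, pow_mod hN b, h]

lemma key (hN : 2 ≤ N) (a b : ℕ) :
    ∑ j : Fin N, zeta N ^ (a * (j : ℕ)) * conj (zeta N ^ (b * (j : ℕ)))
      = if a % N = b % N then (N : ℂ) else 0 := by
  set c : ℂ := zeta N ^ a * conj (zeta N ^ b) with hc
  have hterm : ∀ j : Fin N,
      zeta N ^ (a * (j : ℕ)) * conj (zeta N ^ (b * (j : ℕ))) = c ^ (j : ℕ) := by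
    intro j
    rw [hc, mul_pow, ← pow_mul, ← map_pow, ← pow_mul]
  rw [Finset.sum_congr rfl fun j _ => hterm j]
  have hcN : c ^ N = 1 := by
    rw [hc, mul_pow, ← pow_mul, ← map_pow, ← pow_mul, mul_comm a N, mul_comm b N,
      pow_mul, pow_mul, zeta_pow_N hN, one_pow, one_pow, _root_.map_one, mul_one]
  have hc1 : c = 1 ↔ a % N = b % N := by
    rw [hc, ← pow_eq_pow_iff hN]
    constructor
    · intro h
      have := conj_pow_mul hN b
      calc zeta N ^ a = zeta N ^ a * (zeta N ^ b * conj (zeta N ^ b)) := by rw [this, mul_one]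
        _ = (zeta N ^ a * conj (zeta N ^ b)) * zeta N ^ b := by ring
        _ = zeta N ^ b := by rw [h, one_mul]
    · intro h; rw [h]; exact conj_pow_mul hN b
  rw [Fin.sum_univ_eq_sum_range (fun k => c ^ k) N]
  by_cases h : a % N = b % N
  · simp [h, hc1.mpr h]
  · rw [if_neg h]
    have hcne : c ≠ 1 := fun hh => h (hc1.mp hh)
    rw [geom_sum_eq hcne, hcN, sub_self, zero_div]

def U (N : ℕ) : Matrix (Fin N) (Fin N) ℂ := fun n j => zeta N ^ ((n : ℕ) * (j : ℕ))
def W (N : ℕ) : Matrix (Fin N) (Fin N) ℂ := fun j m => conj (zeta N ^ ((m : ℕ) * (j : ℕ))) / N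

lemma hUW (hN : 2 ≤ N) : U N * W N = 1 := by
  ext n m
  have hNne : (N : ℂ) ≠ 0 := Nat.cast_ne_zero.mpr (by omega)
  rw [Matrix.mul_apply]
  simp only [U, W]
  have : ∀ j : Fin N, zeta N ^ ((n:ℕ) * (j:ℕ)) * (conj (zeta N ^ ((m:ℕ) * (j:ℕ))) / N)
      = zeta N ^ ((n:ℕ) * (j:ℕ)) * conj (zeta N ^ ((m:ℕ) * (j:ℕ))) / N := fun j => by ring
  rw [Finset.sum_congr rfl fun j _ => this j, ← Finset.sum_div, key hN n m, Matrix.one_apply]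
  rcases eq_or_ne n m with rfl | h
  · simp [div_self hNne]
  · have : (n : ℕ) % N ≠ (m : ℕ) % N := by
      simp only [Nat.mod_eq_of_lt n.isLt, Nat.mod_eq_of_lt m.isLt]
      exact fun hh => h (Fin.ext hh)
    simp [this, h]

lemma hWU (hN : 2 ≤ N) : W N * U N = 1 :=
  mul_eq_one_comm.mp (hUW hN)

lemma hUunit (hN : 2 ≤ N) : IsUnit (U N) :=
  ⟨⟨U N, W N, hUW hN, hWU hN⟩, rfl⟩

lemma hUinv (hN : 2 ≤ N) : (U N)⁻¹ = W N := Matrix.inv_eq_right_inv (hUW hN)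

lemma succ_mod_ne (hN : 2 ≤ N) (n : Fin N) : ((n : ℕ) + 1) % N ≠ (n : ℕ) := by
  have hnlt := n.isLt
  rcases Nat.lt_or_ge ((n : ℕ) + 1) N with h1 | h1
  · rw [Nat.mod_eq_of_lt h1]; omega
  · have h2 : (n : ℕ) + 1 = N := by omega
    rw [h2, Nat.mod_self]; omega

lemma hA (hN : 2 ≤ N) :
    (ringMat N).map (fun x => (x : ℂ))
      = U N * (Matrix.diagonal fun j : Fin N => zeta N ^ (j : ℕ) - 1) * W N := by
  have hNne : (N : ℂ) ≠ 0 := Nat.cast_ne_zero.mpr (by omega)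
  ext n m
  rw [Matrix.mul_assoc, Matrix.mul_apply]
  have hterm : ∀ j : Fin N,
      U N n j * ((Matrix.diagonal fun j : Fin N => zeta N ^ (j : ℕ) - 1) * W N) j m
        = (zeta N ^ (((n : ℕ) + 1) * (j : ℕ)) * conj (zeta N ^ ((m : ℕ) * (j : ℕ)))
          - zeta N ^ ((n : ℕ) * (j : ℕ)) * conj (zeta N ^ ((m : ℕ) * (j : ℕ)))) / N := by
    intro j
    rw [Matrix.diagonal_mul]
    simp only [U, W]
    rw [add_mul, one_mul, pow_add]
    ring
  rw [Finset.sum_congr rfl fun j _ => hterm j, ← Finset.sum_div, Finset.sum_sub_distrib,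
    key hN ((n : ℕ) + 1) m, key hN n m]
  simp only [Matrix.map_apply, ringMat, Nat.mod_eq_of_lt n.isLt, Nat.mod_eq_of_lt m.isLt]
  have hne := succ_mod_ne hN n
  split_ifs with h1 h2 h3 h4 h5 h6 h7 h8
  all_goals push_cast
  any_goals (rw [eq_div_iff hNne]; ring)
  all_goals (exfalso; clear hterm; grind)

lemma smul_map (t : ℝ) :
    (t • ringMat N).map (fun x => (x : ℂ))
      = (t : ℂ) • ((ringMat N).map (fun x => (x : ℂ))) := by
  ext n m
  simp [Matrix.map_apply, Matrix.smul_apply, Complex.ofReal_mul]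

lemma exp_eq (hN : 2 ≤ N) (t : ℝ) :
    NormedSpace.exp ((t • ringMat N).map (fun x => (x : ℂ)))
      = U N * (Matrix.diagonal fun j : Fin N =>
          Complex.exp ((t : ℂ) * (zeta N ^ (j : ℕ) - 1))) * W N := by
  have h1 : (t • ringMat N).map (fun x => (x : ℂ))
      = U N * (Matrix.diagonal fun j : Fin N => (t : ℂ) * (zeta N ^ (j : ℕ) - 1)) * W N := by
    rw [smul_map, hA hN, ← smul_mul_assoc, ← mul_smul_comm, ← Matrix.diagonal_smul]
    simp only [Pi.smul_def, smul_eq_mul]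
  rw [h1, ← hUinv hN, Matrix.exp_conj (U N) _ (hUunit hN), Matrix.exp_diagonal]
  have hfun : (NormedSpace.exp fun j : Fin N => (t : ℂ) * (zeta N ^ (j : ℕ) - 1))
      = fun j : Fin N => Complex.exp ((t : ℂ) * (zeta N ^ (j : ℕ) - 1)) := by
    funext j
    rw [Pi.coe_exp, ← congrFun Complex.exp_eq_exp_ℂ]
  rw [hfun]

lemma bridge (t : ℝ) :
    (NormedSpace.exp (t • ringMat N)).map (fun x => (x : ℂ))
      = NormedSpace.exp ((t • ringMat N).map (fun x => (x : ℂ))) := by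
  letI : SeminormedRing (Matrix (Fin N) (Fin N) ℝ) := Matrix.linftyOpSemiNormedRing
  letI : NormedRing (Matrix (Fin N) (Fin N) ℝ) := Matrix.linftyOpNormedRing
  letI : NormedAlgebra ℝ (Matrix (Fin N) (Fin N) ℝ) := Matrix.linftyOpNormedAlgebra
  letI : SeminormedRing (Matrix (Fin N) (Fin N) ℂ) := Matrix.linftyOpSemiNormedRing
  letI : NormedRing (Matrix (Fin N) (Fin N) ℂ) := Matrix.linftyOpNormedRing
  letI : NormedAlgebra ℝ (Matrix (Fin N) (Fin N) ℂ) := Matrix.linftyOpNormedAlgebra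
  letI : NormedAlgebra ℚ (Matrix (Fin N) (Fin N) ℝ) := Matrix.linftyOpNormedAlgebra
  letI : NormedAlgebra ℚ (Matrix (Fin N) (Fin N) ℂ) := Matrix.linftyOpNormedAlgebra
  have := NormedSpace.map_exp (Complex.ofRealHom.mapMatrix (m := Fin N))
    (Continuous.matrix_map continuous_id Complex.continuous_ofReal) (t • ringMat N)
  simp only [RingHom.mapMatrix_apply] at this
  exact this

lemma re_lt_one {z : ℂ} (habs : ‖z‖ = 1) (hne : z ≠ 1) : z.re < 1 := by
  rcases lt_or_eq_of_le (habs ▸ Complex.re_le_norm z) with h | h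
  · exact h
  · exfalso
    apply hne
    have hsq : z.re ^ 2 + z.im ^ 2 = 1 := by
      have := Complex.sq_norm z
      rw [habs, Complex.normSq_apply] at this
      nlinarith [this]
    have him : z.im = 0 := by nlinarith [sq_nonneg z.im]
    exact Complex.ext (by simp [← h]) (by simpa using him)

lemma exp_tendsto {w : ℂ} (hw : w.re < 0) :
    Tendsto (fun t : ℝ => Complex.exp ((t : ℂ) * w)) atTop (nhds 0) := by
  rw [tendsto_zero_iff_norm_tendsto_zero]
  have hnorm : ∀ t : ℝ, ‖Complex.exp ((t : ℂ) * w)‖ = Real.exp (t * w.re) := by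
    intro t
    rw [Complex.norm_exp]
    congr 1
    simp [Complex.mul_re]
  simp only [hnorm]
  exact Real.tendsto_exp_atBot.comp (tendsto_id.atTop_mul_const_of_neg hw)

lemma entry_tendsto (hN : 2 ≤ N) (n m : Fin N) :
    Tendsto (fun t : ℝ => (U N * (Matrix.diagonal fun j : Fin N =>
        Complex.exp ((t : ℂ) * (zeta N ^ (j : ℕ) - 1))) * W N) n m)
      atTop (nhds ((N : ℂ)⁻¹)) := by
  have hNne : (N : ℂ) ≠ 0 := Nat.cast_ne_zero.mpr (by omega)
  have hfun : ∀ t : ℝ, (U N * (Matrix.diagonal fun j : Fin N =>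
        Complex.exp ((t : ℂ) * (zeta N ^ (j : ℕ) - 1))) * W N) n m
      = ∑ j : Fin N, U N n j * (Complex.exp ((t : ℂ) * (zeta N ^ (j : ℕ) - 1)) * W N j m) := by
    intro t
    rw [Matrix.mul_assoc, Matrix.mul_apply]
    exact Finset.sum_congr rfl fun j _ => by rw [Matrix.diagonal_mul]
  simp only [hfun]
  have hN0 : 0 < N := by omega
  set j0 : Fin N := ⟨0, hN0⟩ with hj0
  have hsum : ((N : ℂ)⁻¹) = ∑ j : Fin N, (if j = j0 then (N : ℂ)⁻¹ else 0) := by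
    rw [Finset.sum_ite_eq' Finset.univ j0 (fun _ => (N : ℂ)⁻¹)]
    simp
  rw [hsum]
  apply tendsto_finset_sum
  intro j _
  rcases eq_or_ne j j0 with rfl | hj
  · have hz : ((j0 : ℕ)) = 0 := rfl
    have hconst : ∀ t : ℝ, U N n j0 * (Complex.exp ((t : ℂ) * (zeta N ^ (j0 : ℕ) - 1))
        * W N j0 m) = (N : ℂ)⁻¹ := by
      intro t
      simp only [U, W, hz, pow_zero, mul_zero, Nat.mul_zero, sub_self, Complex.exp_zero,
        _root_.map_one, one_mul, mul_one]
      rw [one_div]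
    simp only [hconst, if_pos rfl]
    exact tendsto_const_nhds
  · rw [if_neg hj]
    have hjpos : 0 < (j : ℕ) := Nat.pos_of_ne_zero fun hh => hj (Fin.ext (by simp [hh, hj0]))
    have hne1 : zeta N ^ (j : ℕ) ≠ 1 :=
      (hprim hN).pow_ne_one_of_pos_of_lt hjpos.ne' j.isLt
    have habsj : ‖zeta N ^ (j : ℕ)‖ = 1 := by
      rw [norm_pow, abs_zeta, one_pow]
    have hre : (zeta N ^ (j : ℕ) - 1).re < 0 := by
      have := re_lt_one habsj hne1
      simp [Complex.sub_re]
      linarith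
    have := ((exp_tendsto hre).mul_const (W N j m)).const_mul (U N n j)
    simpa using this

end RingAux

open RingAux in
/-- each (n,m) entry of e^{At} converges to 1/N as t → ∞. -/
theorem stmt3 (N : ℕ) (hN : 2 ≤ N) :
    ∀ n m : Fin N,
      Tendsto (fun t : ℝ => (NormedSpace.exp (t • ringMat N)) n m)
        atTop (nhds ((N : ℝ)⁻¹)) := by
  intro n m
  have hkey : ∀ t : ℝ, ((NormedSpace.exp (t • ringMat N)) n m : ℂ)
      = (U N * (Matrix.diagonal fun j : Fin N =>
          Complex.exp ((t : ℂ) * (zeta N ^ (j : ℕ) - 1))) * W N) n m := by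
    intro t
    rw [← exp_eq hN t, ← bridge t]
    rfl
  have h2 : ∀ t : ℝ, (NormedSpace.exp (t • ringMat N)) n m
      = ((U N * (Matrix.diagonal fun j : Fin N =>
          Complex.exp ((t : ℂ) * (zeta N ^ (j : ℕ) - 1))) * W N) n m).re := by
    intro t
    rw [← hkey t, Complex.ofReal_re]
  simp only [h2]
  have hlim := (Complex.continuous_re.tendsto _).comp (entry_tendsto hN n m)
  have : ((N : ℂ)⁻¹).re = (N : ℝ)⁻¹ := by
    rw [← Complex.ofReal_natCast, ← Complex.ofReal_inv, Complex.ofReal_re]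
  rw [← this]
  exact hlim
end
end

section
/- The characteristic polynomial of the 2N×2N matrix B factors as det(w·I_{2N} − B) = (w + β)^N · Π_{k=0}^{N−1} (w − λω_k) for all w ∈ ℂ; in particular the eigenvalues of B are exactly λω_0, …, λω_{N−1} together with −β, the latter with algebraic multiplicity at least N. -/
open Matrix Complex Finset

noncomputable section

/-- The 2N×2N block matrix B = [[λA, A], [0, −β I_N]] (complexified). -/
def blockB (N : ℕ) (lam beta : ℝ) : Matrix (Fin N ⊕ Fin N) (Fin N ⊕ Fin N) ℂ :=
  Matrix.fromBlocks ((lam : ℂ) • (ringMat N).map Complex.ofReal)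
    ((ringMat N).map Complex.ofReal) 0 (-(beta : ℂ) • 1)

/-! ### Auxiliary lemmas -/

lemma aux_fin_one_ne_zero {N : ℕ} [NeZero N] (hN : 2 ≤ N) : (1 : Fin N) ≠ 0 := by
  intro h
  have := congrArg Fin.val h
  simp [Fin.val_one'] at this
  omega

lemma aux_val_add_one {N : ℕ} [NeZero N] (i : Fin N) :
    ((i + 1 : Fin N) : ℕ) = ((i : ℕ) + 1) % N := by
  rw [Fin.add_def, Fin.val_one']
  simp [Nat.add_mod]

open Fin.NatCast in
/-- Any permutation satisfying `σ i ∈ {i, i-1}` for all `i` is the identity or the full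
backwards rotation. -/
lemma aux_perm_eq {N : ℕ} [NeZero N] (hN : 2 ≤ N) (σ : Equiv.Perm (Fin N))
    (h : ∀ i, σ i = i ∨ σ i = i - 1) : σ = 1 ∨ ∀ i, σ i = i - 1 := by
  by_cases hid : ∀ i, σ i = i
  · left; exact Equiv.ext hid
  · right
    push_neg at hid
    obtain ⟨i, hi⟩ := hid
    have hi' : σ i = i - 1 := (h i).resolve_left hi
    have key : ∀ k : ℕ, σ (i - (k : Fin N)) = i - (k : Fin N) - 1 := by
      intro k
      induction k with
      | zero => simpa using hi'
      | succ k ih =>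
        have hcast : ((k + 1 : ℕ) : Fin N) = (k : Fin N) + 1 := by push_cast; ring
        rw [hcast]
        have hgoal : i - ((k : Fin N) + 1) = i - (k : Fin N) - 1 := sub_add_eq_sub_sub _ _ _
        rw [hgoal]
        rcases h (i - (k : Fin N) - 1) with h1 | h1
        · exfalso
          have heq := σ.injective (h1.trans ih.symm)
          exact aux_fin_one_ne_zero hN (sub_eq_self.mp heq)
        · exact h1
    intro j
    have := key ((i - j).val)
    rwa [Fin.cast_val_eq_self, sub_sub_cancel] at this

/-- Determinant of the "cyclic bidiagonal" matrix. -/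
lemma aux_det_cyclic {N : ℕ} [NeZero N] (hN : 2 ≤ N) (c d : ℂ)
    (M : Matrix (Fin N) (Fin N) ℂ)
    (hM : ∀ i j, M i j = if j = i then c else if j = i + 1 then d else 0) :
    M.det = c ^ N + (-1 : ℂ) ^ (N - 1) * d ^ N := by
  obtain ⟨n, rfl⟩ : ∃ n, N = n + 1 := ⟨N - 1, by omega⟩
  set σ₀ : Equiv.Perm (Fin (n + 1)) := (finRotate (n + 1))⁻¹ with hσ₀
  have hσ₀app : ∀ i, σ₀ i = i - 1 := by
    intro i
    apply (finRotate (n + 1)).injective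
    rw [hσ₀]
    simp [sub_add_cancel]
  have hone : (1 : Fin (n + 1)) ≠ 0 := aux_fin_one_ne_zero hN
  have hσ₀ne : (1 : Equiv.Perm (Fin (n + 1))) ≠ σ₀ := by
    intro hcontra
    have h0 : σ₀ 0 = 0 - 1 := hσ₀app 0
    rw [← hcontra] at h0
    simp only [Equiv.Perm.coe_one, id_eq, zero_sub] at h0
    exact hone (by rw [← neg_eq_zero, ← h0])
  rw [Matrix.det_apply]
  have hzero : ∀ σ ∈ (Finset.univ : Finset (Equiv.Perm (Fin (n + 1)))),
      σ ∉ ({1, σ₀} : Finset (Equiv.Perm (Fin (n + 1)))) →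
      Equiv.Perm.sign σ • ∏ i, M (σ i) i = 0 := by
    intro σ _ hσ
    simp only [Finset.mem_insert, Finset.mem_singleton, not_or] at hσ
    have : ¬ ∀ i, σ i = i ∨ σ i = i - 1 := by
      intro hall
      rcases aux_perm_eq hN σ hall with h1 | h1
      · exact hσ.1 h1
      · exact hσ.2 (Equiv.ext fun i => (h1 i).trans (hσ₀app i).symm)
    push_neg at this
    obtain ⟨i, hi1, hi2⟩ := this
    have hentry : M (σ i) i = 0 := by
      rw [hM]
      rw [if_neg (fun hh => hi1 hh.symm), if_neg]
      intro hh
      exact hi2 (by rw [eq_sub_iff_add_eq]; exact hh.symm)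
    have hprod : (∏ i, M (σ i) i) = 0 := Finset.prod_eq_zero (Finset.mem_univ i) hentry
    rw [hprod, smul_zero]
  rw [← Finset.sum_subset (Finset.subset_univ ({1, σ₀} : Finset (Equiv.Perm (Fin (n + 1)))))
      hzero]
  rw [Finset.sum_pair hσ₀ne]
  have hterm1 : (Equiv.Perm.sign (1 : Equiv.Perm (Fin (n + 1)))) •
      ∏ i, M ((1 : Equiv.Perm (Fin (n + 1))) i) i = c ^ (n + 1) := by
    have : ∀ i : Fin (n + 1), M ((1 : Equiv.Perm (Fin (n + 1))) i) i = c := by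
      intro i
      rw [Equiv.Perm.one_apply, hM, if_pos rfl]
    rw [Finset.prod_congr rfl (fun i _ => this i)]
    simp [Finset.prod_const, Finset.card_univ]
  have hterm2 : (Equiv.Perm.sign σ₀) • ∏ i, M (σ₀ i) i = (-1 : ℂ) ^ n * d ^ (n + 1) := by
    have hent : ∀ i : Fin (n + 1), M (σ₀ i) i = d := by
      intro i
      rw [hσ₀app i, hM]
      rw [if_neg, if_pos (by rw [sub_add_cancel])]
      intro hh
      exact hone (by simpa using (sub_eq_self.mp hh.symm))
    have hprod : ∏ i, M (σ₀ i) i = d ^ (n + 1) := by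
      rw [Finset.prod_congr rfl (fun i _ => hent i)]
      simp [Finset.prod_const, Finset.card_univ]
    have hsign : Equiv.Perm.sign σ₀ = (-1) ^ n := by
      rw [hσ₀, Equiv.Perm.sign_inv, sign_finRotate, Nat.add_sub_cancel]
    rw [hprod, hsign, Units.smul_def, zsmul_eq_mul]
    push_cast
    ring
  rw [hterm1, hterm2]
  simp

/-- Product over the N-th roots of unity. -/
lemma aux_prod_gam {N : ℕ} (hN : 2 ≤ N) (z : ℂ) :
    ∏ k ∈ Finset.range N, (z - gam N k) = z ^ N - 1 := by
  haveI : NeZero N := ⟨by omega⟩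
  have hpos : 0 < N := by omega
  set ζ := Complex.exp (2 * Real.pi * Complex.I / N) with hζ
  have hprim : IsPrimitiveRoot ζ N := Complex.isPrimitiveRoot_exp N (by omega)
  have hgam : ∀ k : ℕ, gam N k = ζ ^ k := by
    intro k
    rw [hζ, ← Complex.exp_nat_mul, gam]
    congr 1
    push_cast
    ring
  have himg : Polynomial.nthRootsFinset N (1 : ℂ) = (Finset.range N).image (fun k => ζ ^ k) := by
    ext x
    rw [Polynomial.mem_nthRootsFinset hpos, Finset.mem_image]
    constructor
    · intro hx
      obtain ⟨i, hi, rfl⟩ := hprim.eq_pow_of_pow_eq_one hx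
      exact ⟨i, Finset.mem_range.mpr hi, rfl⟩
    · rintro ⟨k, _, rfl⟩
      rw [← pow_mul, mul_comm, pow_mul, hprim.pow_eq_one, one_pow]
  have hpoly := Polynomial.X_pow_sub_one_eq_prod hpos hprim
  have heval := congrArg (Polynomial.eval z) hpoly
  rw [Polynomial.eval_sub, Polynomial.eval_pow, Polynomial.eval_X, Polynomial.eval_one,
    Polynomial.eval_prod] at heval
  simp only [Polynomial.eval_sub, Polynomial.eval_X, Polynomial.eval_C] at heval
  rw [himg, Finset.prod_image (fun i hi j hj hij =>
    hprim.pow_inj (Finset.mem_range.mp hi) (Finset.mem_range.mp hj) hij)] at heval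
  rw [heval]
  exact Finset.prod_congr rfl fun k _ => by rw [hgam k]

lemma aux_prod_factor {N : ℕ} (hN : 2 ≤ N) {lam : ℝ} (hlam : lam ≠ 0) (w : ℂ) :
    ∏ k ∈ Finset.range N, (w - (lam : ℂ) * (gam N k - 1))
      = (w + lam) ^ N - (lam : ℂ) ^ N := by
  have hl : (lam : ℂ) ≠ 0 := Complex.ofReal_ne_zero.mpr hlam
  have hfac : ∀ k ∈ Finset.range N,
      w - (lam : ℂ) * (gam N k - 1) = (lam : ℂ) * ((w + lam) / lam - gam N k) := by
    intro k _
    field_simp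
    ring
  rw [Finset.prod_congr rfl hfac, Finset.prod_mul_distrib, Finset.prod_const,
    Finset.card_range, aux_prod_gam hN, mul_sub, mul_one, ← mul_pow,
    mul_div_cancel₀ _ hl]

lemma aux_eval_charpoly {n : Type*} [DecidableEq n] [Fintype n] (M : Matrix n n ℂ) (w : ℂ) :
    (Matrix.charpoly M).eval w = (w • (1 : Matrix n n ℂ) - M).det := by
  rw [Matrix.charpoly, eval_det, Matrix.matPolyEquiv_charmatrix,
    Polynomial.eval_sub, Polynomial.eval_X, Polynomial.eval_C]
  congr 1
  ext i j
  by_cases h : i = j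
  · subst h
    simp [Matrix.scalar_apply, Matrix.one_apply, Matrix.diagonal_apply]
  · simp [Matrix.scalar_apply, Matrix.one_apply_ne h, Matrix.diagonal_apply_ne _ h]

lemma aux_ring_block {N : ℕ} [NeZero N] (hN : 2 ≤ N) (lam : ℝ) (w : ℂ) (i j : Fin N) :
    (w • (1 : Matrix (Fin N) (Fin N) ℂ) - (lam : ℂ) • (ringMat N).map Complex.ofReal) i j
      = if j = i then w + lam else if j = i + 1 then -(lam : ℂ) else 0 := by
  have hc2 : ((j : ℕ) = ((i : ℕ) + 1) % N) ↔ j = i + 1 := by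
    rw [← aux_val_add_one i, Fin.val_eq_val]
  simp only [Matrix.sub_apply, Matrix.smul_apply, Matrix.one_apply, Matrix.map_apply,
    ringMat, smul_eq_mul]
  by_cases h1 : j = i
  · subst h1
    rw [if_pos rfl, if_pos rfl, if_pos rfl]
    push_cast
    ring
  · rw [if_neg (fun hh => h1 hh.symm), if_neg (fun hh => h1 (Fin.val_eq_val j i |>.mp hh)),
      if_neg h1]
    by_cases h2 : j = i + 1
    · rw [if_pos (hc2.mpr h2), if_pos h2]
      push_cast
      ring
    · rw [if_neg (fun hh => h2 (hc2.mp hh)), if_neg h2]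
      push_cast
      ring

/-- The key determinant computation. -/
lemma aux_det_blockB {N : ℕ} (hN : 2 ≤ N) (lam beta : ℝ) (hlam : lam ≠ 0) (w : ℂ) :
    Matrix.det (w • (1 : Matrix (Fin N ⊕ Fin N) (Fin N ⊕ Fin N) ℂ) - blockB N lam beta) =
      (w + beta) ^ N * ∏ k ∈ Finset.range N, (w - lam * (gam N k - 1)) := by
  haveI : NeZero N := ⟨by omega⟩
  have hblock : w • (1 : Matrix (Fin N ⊕ Fin N) (Fin N ⊕ Fin N) ℂ) - blockB N lam beta
      = Matrix.fromBlocks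
          (w • 1 - (lam : ℂ) • (ringMat N).map Complex.ofReal)
          (-(ringMat N).map Complex.ofReal) 0 ((w + beta) • 1) := by
    rw [blockB, ← Matrix.fromBlocks_one, Matrix.fromBlocks_smul, sub_eq_add_neg,
      Matrix.fromBlocks_neg, Matrix.fromBlocks_add]
    simp only [smul_zero, zero_add, neg_zero, neg_smul, neg_neg, ← sub_eq_add_neg,
      zero_sub, ← add_smul]
  rw [hblock, Matrix.det_fromBlocks_zero₂₁,
    aux_det_cyclic hN (w + lam) (-(lam : ℂ)) _ (fun i j => aux_ring_block hN lam w i j)]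
  have hD : ((w + (beta : ℂ)) • (1 : Matrix (Fin N) (Fin N) ℂ)).det = (w + beta) ^ N := by
    rw [Matrix.det_smul, Matrix.det_one, mul_one, Fintype.card_fin]
  rw [hD, aux_prod_factor hN hlam w]
  have hsgn : (-1 : ℂ) ^ (N - 1) * (-(lam : ℂ)) ^ N = -(lam : ℂ) ^ N := by
    have hodd : Odd (N - 1 + N) := ⟨N - 1, by omega⟩
    rw [show (-(lam : ℂ)) ^ N = (-1 : ℂ) ^ N * (lam : ℂ) ^ N from neg_pow _ _,
      ← mul_assoc, ← pow_add, hodd.neg_one_pow]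
    ring
  rw [hsgn]
  ring

/-- det(w·I_{2N} − B) = (w+β)^N ∏_{k=0}^{N-1}(w − λω_k); in particular the
eigenvalues of B are exactly the λω_k together with −β, the latter with algebraic
multiplicity at least N. -/
theorem stmt5 (N : ℕ) (hN : 2 ≤ N) (lam beta : ℝ) (hlam : 0 < lam) (hbeta : 0 < beta) :
    (∀ w : ℂ,
        Matrix.det (w • (1 : Matrix (Fin N ⊕ Fin N) (Fin N ⊕ Fin N) ℂ) - blockB N lam beta) =
          (w + beta) ^ N * ∏ k ∈ Finset.range N, (w - lam * (gam N k - 1))) ∧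
    spectrum ℂ (blockB N lam beta) =
      {w : ℂ | ∃ k < N, w = lam * (gam N k - 1)} ∪ {-(beta : ℂ)} ∧
    N ≤ Polynomial.rootMultiplicity (-(beta : ℂ)) (Matrix.charpoly (blockB N lam beta)) := by
  have hdet := fun w => aux_det_blockB hN lam beta (ne_of_gt hlam) w
  have hNne : N ≠ 0 := by omega
  refine ⟨hdet, ?_, ?_⟩
  · ext w
    rw [spectrum.mem_iff, Algebra.algebraMap_eq_smul_one, Matrix.isUnit_iff_isUnit_det,
      isUnit_iff_ne_zero, not_not, hdet w, mul_eq_zero, pow_eq_zero_iff hNne,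
      Finset.prod_eq_zero_iff]
    simp only [Set.mem_union, Set.mem_setOf_eq, Set.mem_singleton_iff, Finset.mem_range,
      sub_eq_zero, add_eq_zero_iff_eq_neg]
    constructor
    · rintro (h1 | ⟨k, hk1, hk2⟩)
      exacts [Or.inr h1, Or.inl ⟨k, hk1, hk2⟩]
    · rintro (⟨k, hk1, hk2⟩ | h1)
      exacts [Or.inr ⟨k, hk1, hk2⟩, Or.inl h1]
  · have hpoly : Matrix.charpoly (blockB N lam beta)
        = (Polynomial.X + Polynomial.C (beta : ℂ)) ^ N *
          ∏ k ∈ Finset.range N,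
            (Polynomial.X - Polynomial.C ((lam : ℂ) * (gam N k - 1))) := by
      apply Polynomial.funext
      intro w
      rw [aux_eval_charpoly, hdet w]
      simp [Polynomial.eval_prod]
    have hp0 : Matrix.charpoly (blockB N lam beta) ≠ 0 :=
      (Matrix.charpoly_monic _).ne_zero
    rw [Polynomial.le_rootMultiplicity_iff hp0, hpoly]
    have hXC : Polynomial.X - Polynomial.C (-(beta : ℂ))
        = Polynomial.X + Polynomial.C (beta : ℂ) := by
      rw [map_neg, sub_neg_eq_add]
    rw [hXC]
    exact dvd_mul_right _ _
end
end

section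
/- Assume β + λω_k ≠ 0 for all k = 0,…,N−1. Then for all vectors p, q ∈ ℝ^{2N}, the integral ∫_0^∞ | ⟨ p, e^{tB} G G^⊤ e^{tB^⊤} q ⟩ | dt is finite; consequently the matrix Σ(∞) = ∫_0^∞ e^{tB} G G^⊤ e^{tB^⊤} dt is a well-defined 2N×2N matrix. -/
open Matrix Complex Finset MeasureTheory

noncomputable section

/-- The 2N×2N real block matrix B = [[λA, A], [0, −β I_N]]. -/
def blockBR (N : ℕ) (lam beta : ℝ) : Matrix (Fin N ⊕ Fin N) (Fin N ⊕ Fin N) ℝ :=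
  Matrix.fromBlocks (lam • ringMat N) (ringMat N) 0 (-beta • 1)

/-- The 2N×2N real block matrix G = [[0, 0], [0, σ I_N]]. -/
def blockG (N : ℕ) (σ : ℝ) : Matrix (Fin N ⊕ Fin N) (Fin N ⊕ Fin N) ℝ :=
  Matrix.fromBlocks 0 0 0 (σ • 1)

namespace Stmt8Aux

lemma gam_pow (N k m : ℕ) : gam N k ^ m = Complex.exp (2 * Real.pi * Complex.I * (k * m) / N) := by
  rw [gam, ← Complex.exp_nat_mul]
  congr 1
  ring

lemma gam_pow_N (N k : ℕ) (hN : N ≠ 0) : gam N k ^ N = 1 := by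
  rw [gam_pow]
  have hN' : (N:ℂ) ≠ 0 := Nat.cast_ne_zero.mpr hN
  have : 2 * (Real.pi:ℂ) * Complex.I * (k * N) / N = k * (2 * Real.pi * Complex.I) := by
    field_simp
  rw [this, Complex.exp_nat_mul_two_pi_mul_I]

lemma gam_pow_mod (N k m : ℕ) (hN : N ≠ 0) : gam N k ^ (m % N) = gam N k ^ m := by
  conv_rhs => rw [← Nat.div_add_mod m N]
  rw [pow_add, pow_mul, gam_pow_N N k hN, one_pow, one_mul]

lemma gam_zero (N : ℕ) : gam N 0 = 1 := by
  simp [gam]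

end Stmt8Aux

namespace Stmt8Aux

abbrev Idx (N : ℕ) := Fin N ⊕ Fin N

def Ac (N : ℕ) : Matrix (Fin N) (Fin N) ℂ := (ringMat N).map Complex.ofReal
def Bc (N : ℕ) (lam beta : ℝ) : Matrix (Idx N) (Idx N) ℂ := (blockBR N lam beta).map Complex.ofReal
def wv (N k : ℕ) : Fin N → ℂ := fun n => gam N k ^ (n : ℕ)
def om (N k : ℕ) : ℂ := gam N k - 1
def cf (N : ℕ) (lam beta : ℝ) (k : ℕ) : ℂ := - om N k / (beta + lam * om N k)
def v1 (N k : ℕ) : Idx N → ℂ := Sum.elim (wv N k) 0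
def v2 (N : ℕ) (lam beta : ℝ) (k : ℕ) : Idx N → ℂ :=
  Sum.elim (cf N lam beta k • wv N k) (wv N k)

lemma finrot_ne {N : ℕ} (hN : 2 ≤ N) (n : Fin N) :
    ((n : ℕ) + 1) % N ≠ (n : ℕ) := by
  have hn := n.isLt
  rcases lt_or_ge ((n:ℕ) + 1) N with h | h
  · rw [Nat.mod_eq_of_lt h]; omega
  · have : (n:ℕ) + 1 = N := by omega
    rw [this, Nat.mod_self]; omega

lemma Ac_mulVec {N : ℕ} (hN : 2 ≤ N) (k : ℕ) :
    Ac N *ᵥ wv N k = om N k • wv N k := by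
  have hN0 : N ≠ 0 := by omega
  funext n
  have hlt : ((n : ℕ) + 1) % N < N := Nat.mod_lt _ (by omega)
  set n' : Fin N := ⟨((n : ℕ) + 1) % N, hlt⟩ with hn'
  have hsplit : ∀ m : Fin N, Ac N n m = (if m = n then (-1:ℂ) else 0) +
      (if m = n' then (1:ℂ) else 0) := by
    intro m
    simp only [Ac, ringMat, Matrix.map_apply]
    rcases eq_or_ne m n with rfl | hmn
    · have hne : m ≠ n' := by
        intro h
        exact finrot_ne hN m (congrArg Fin.val h).symm
      simp [hne]
    · have : (m:ℕ) ≠ (n:ℕ) := fun h => hmn (Fin.ext h)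
      rcases eq_or_ne m n' with rfl | hmn'
      · simp [this, hmn]
        rfl
      · have h2 : (m:ℕ) ≠ ((n:ℕ) + 1) % N := fun h => hmn' (Fin.ext h)
        simp [this, h2, hmn, hmn']
  have : (Ac N *ᵥ wv N k) n = ∑ m : Fin N, ((if m = n then (-1:ℂ) else 0) +
      (if m = n' then (1:ℂ) else 0)) * wv N k m := by
    simp only [Matrix.mulVec, dotProduct]
    exact Finset.sum_congr rfl fun m _ => by rw [hsplit m]
  rw [this]
  simp only [add_mul, Finset.sum_add_distrib, ite_mul, neg_mul, one_mul, zero_mul]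
  rw [Finset.sum_ite_eq' Finset.univ n (fun m => -(wv N k m)),
      Finset.sum_ite_eq' Finset.univ n' (fun m => wv N k m)]
  simp only [Finset.mem_univ, if_true]
  have hwn' : wv N k n' = gam N k * wv N k n := by
    simp only [wv, hn']
    rw [gam_pow_mod N k _ hN0, pow_succ, mul_comm]
  rw [hwn']
  simp only [om, wv, Pi.smul_apply, smul_eq_mul]
  ring

end Stmt8Aux

namespace Stmt8Aux

lemma Bc_eq (N : ℕ) (lam beta : ℝ) :
    Bc N lam beta = Matrix.fromBlocks ((lam:ℂ) • Ac N) (Ac N) 0 ((-beta:ℂ) • 1) := by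
  funext i j
  rcases i with i | i <;> rcases j with j | j <;>
    simp [Bc, blockBR, Ac, Matrix.one_apply, mul_ite, apply_ite Complex.ofReal]

lemma Bc_mulVec_v1 {N : ℕ} (hN : 2 ≤ N) (lam beta : ℝ) (k : ℕ) :
    Bc N lam beta *ᵥ v1 N k = ((lam : ℂ) * om N k) • v1 N k := by
  rw [Bc_eq, v1, Matrix.fromBlocks_mulVec]
  funext i
  rcases i with i | i
  · simp [Matrix.smul_mulVec, Ac_mulVec hN, smul_smul, Sum.elim_comp_inl,
      Sum.elim_comp_inr, mul_assoc]
  · simp [Sum.elim_comp_inl, Sum.elim_comp_inr]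

lemma Bc_mulVec_v2 {N : ℕ} (hN : 2 ≤ N) (lam beta : ℝ) (k : ℕ)
    (hden : (beta:ℂ) + lam * om N k ≠ 0) :
    Bc N lam beta *ᵥ v2 N lam beta k = (-(beta:ℂ)) • v2 N lam beta k := by
  have hcf : (lam:ℂ) * (cf N lam beta k * om N k) + om N k = -beta * cf N lam beta k := by
    rw [cf]; field_simp; ring
  rw [Bc_eq, v2, Matrix.fromBlocks_mulVec]
  funext i
  rcases i with i | i
  · simp only [Sum.elim_inl, Sum.elim_comp_inl, Sum.elim_comp_inr, Matrix.mulVec_smul,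
      Matrix.smul_mulVec, Ac_mulVec hN, Pi.add_apply, Pi.smul_apply, smul_eq_mul]
    linear_combination wv N k i * hcf
  · simp [Sum.elim_comp_inl, Sum.elim_comp_inr, Matrix.mulVec_smul, Matrix.neg_mulVec,
      Matrix.smul_mulVec, Matrix.one_mulVec]

end Stmt8Aux

namespace Stmt8Aux

lemma exp_R_complex (μ : ℂ) : NormedSpace.exp μ = Complex.exp μ := by
  rw [Complex.exp_eq_exp_ℂ]

lemma exp_mulVec_eigen {n : Type*} [Fintype n] [DecidableEq n]
    (M : Matrix n n ℂ) (v : n → ℂ) (μ : ℂ) (h : M *ᵥ v = μ • v) :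
    NormedSpace.exp M *ᵥ v = Complex.exp μ • v := by
  letI : SeminormedRing (Matrix n n ℂ) := Matrix.linftyOpSemiNormedRing
  letI : NormedRing (Matrix n n ℂ) := Matrix.linftyOpNormedRing
  letI : NormedAlgebra ℝ (Matrix n n ℂ) := Matrix.linftyOpNormedAlgebra
  have hpow : ∀ m : ℕ, M ^ m *ᵥ v = μ ^ m • v := by
    intro m
    induction m with
    | zero => simp
    | succ m ih =>
      rw [pow_succ', ← Matrix.mulVec_mulVec, ih, Matrix.mulVec_smul, h, smul_smul, ← pow_succ]
  let L : Matrix n n ℂ →ₗ[ℝ] (n → ℂ) :=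
    { toFun := fun A => A *ᵥ v
      map_add' := fun A B => Matrix.add_mulVec A B v
      map_smul' := fun r A => by
        funext i
        simp [Matrix.mulVec, dotProduct, Finset.smul_sum, smul_mul_assoc, mul_assoc] }
  let L' : Matrix n n ℂ →L[ℝ] (n → ℂ) := ⟨L, L.continuous_of_finiteDimensional⟩
  have hLapp : ∀ A : Matrix n n ℂ, L' A = A *ᵥ v := fun A => rfl
  have hsum : Summable fun m : ℕ => ((Nat.factorial m : ℝ))⁻¹ • M ^ m :=
    NormedSpace.expSeries_summable' (𝕂 := ℝ) M
  calc NormedSpace.exp M *ᵥ v = L' (∑' m : ℕ, ((Nat.factorial m : ℝ))⁻¹ • M ^ m) := by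
        rw [NormedSpace.exp_eq_tsum ℝ]
        rfl
    _ = ∑' m : ℕ, L' (((Nat.factorial m : ℝ))⁻¹ • M ^ m) := (L'.map_tsum hsum)
    _ = ∑' m : ℕ, (((Nat.factorial m : ℝ))⁻¹ • μ ^ m) • v := by
        refine tsum_congr fun m => ?_
        rw [hLapp, Matrix.smul_mulVec, hpow m, ← smul_assoc]
    _ = (∑' m : ℕ, ((Nat.factorial m : ℝ))⁻¹ • μ ^ m) • v := by
        rw [(NormedSpace.expSeries_summable' (𝕂 := ℝ) μ).tsum_smul_const]
    _ = Complex.exp μ • v := by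
        have : (∑' m : ℕ, ((Nat.factorial m : ℝ))⁻¹ • μ ^ m) = NormedSpace.exp μ := by
          rw [NormedSpace.exp_eq_tsum ℝ]
        rw [this, exp_R_complex]

end Stmt8Aux

namespace Stmt8Aux

lemma expand {N : ℕ} (hN : 2 ≤ N) (j n : Fin N) :
    (∑ k ∈ Finset.range N, (starRingEnd ℂ) (gam N k ^ (j:ℕ)) * wv N k n)
      = if n = j then (N:ℂ) else 0 := by
  have hN' : (N:ℂ) ≠ 0 := Nat.cast_ne_zero.mpr (by omega)
  have hpi : (Real.pi:ℂ) ≠ 0 := by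
    exact_mod_cast Real.pi_ne_zero
  set x : ℂ := Complex.exp (2 * Real.pi * Complex.I * (((n:ℕ):ℂ) - ((j:ℕ):ℂ)) / N) with hx
  have hterm : ∀ k, (starRingEnd ℂ) (gam N k ^ (j:ℕ)) * wv N k n = x ^ k := by
    intro k
    rw [wv, gam_pow, gam_pow, ← Complex.exp_conj, ← Complex.exp_add, hx, ← Complex.exp_nat_mul]
    congr 1
    have hc : (starRingEnd ℂ) (2 * (Real.pi:ℂ) * Complex.I * ((k:ℂ) * ((j:ℕ):ℂ)) / N)
        = 2 * (Real.pi:ℂ) * (-Complex.I) * ((k:ℂ) * ((j:ℕ):ℂ)) / N := by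
      simp [map_div₀, Complex.conj_I, Complex.conj_ofReal, map_ofNat]
    rw [hc]
    field_simp
    ring
  rw [Finset.sum_congr rfl fun k _ => hterm k]
  rcases eq_or_ne n j with rfl | hne
  · have : x = 1 := by
      rw [hx]
      simp
    rw [this]
    simp
  · have hxN : x ^ N = 1 := by
      rw [hx, ← Complex.exp_nat_mul]
      have : (N:ℂ) * (2 * Real.pi * Complex.I * (((n:ℕ):ℂ) - ((j:ℕ):ℂ)) / N)
          = (((n:ℤ) - (j:ℤ) : ℤ):ℂ) * (2 * Real.pi * Complex.I) := by
        push_cast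
        field_simp
      rw [this, Complex.exp_int_mul_two_pi_mul_I]
    have hx1 : x ≠ 1 := by
      intro h
      rw [hx, Complex.exp_eq_one_iff] at h
      obtain ⟨m, hm⟩ := h
      have h2 : (((n:ℕ):ℂ) - ((j:ℕ):ℂ)) = (m:ℂ) * N := by
        have hI : (2:ℂ) * Real.pi * Complex.I ≠ 0 := by
          simp [Real.pi_ne_zero, Complex.I_ne_zero, hpi]
        rw [div_eq_iff hN'] at hm
        apply mul_left_cancel₀ hI
        linear_combination hm
      have h3 : (n:ℤ) - (j:ℤ) = m * N := by
        exact_mod_cast h2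
      have hnj : (n:ℤ) ≠ (j:ℤ) := by
        intro hh
        exact hne (Fin.ext (by exact_mod_cast hh))
      have habs : |(n:ℤ) - (j:ℤ)| < N := by
        have h1 := n.isLt
        have h2 := j.isLt
        rw [abs_lt]
        omega
      have hm0 : m ≠ 0 := by
        intro hh
        rw [hh] at h3
        simp at h3
        omega
      have : (N:ℤ) ≤ |m * N| := by
        rw [abs_mul]
        have : (1:ℤ) ≤ |m| := Int.one_le_abs hm0
        have hNpos : (0:ℤ) < N := by exact_mod_cast (by omega : 0 < N)
        calc (N:ℤ) = 1 * N := (one_mul _).symm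
          _ ≤ |m| * N := by
              apply mul_le_mul_of_nonneg_right this (le_of_lt hNpos)
          _ = |m| * |(N:ℤ)| := by rw [abs_of_pos hNpos]
      rw [← h3] at this
      omega
    rw [geom_sum_eq hx1, hxN]
    simp [hne]

end Stmt8Aux

namespace Stmt8Aux

def Fv (N : ℕ) (lam beta : ℝ) (k : ℕ) (t : ℝ) : Idx N → ℂ :=
  Complex.exp (-(beta:ℂ) * t) • v2 N lam beta k
    - (cf N lam beta k * Complex.exp (((lam:ℂ) * om N k) * t)) • v1 N k

lemma decomp (N : ℕ) (lam beta : ℝ) (k : ℕ) :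
    Sum.elim (0 : Fin N → ℂ) (wv N k) = v2 N lam beta k - cf N lam beta k • v1 N k := by
  funext i
  rcases i with i | i <;> simp [v1, v2]

lemma real_smul_eigen {n : Type*} [Fintype n] [DecidableEq n]
    (M : Matrix n n ℂ) (v : n → ℂ) (μ : ℂ) (h : M *ᵥ v = μ • v) (t : ℝ) :
    (t • M) *ᵥ v = (μ * t) • v := by
  rw [Matrix.smul_mulVec, h]
  funext i
  simp [Complex.real_smul]
  ring

lemma exp_col {N : ℕ} (hN : 2 ≤ N) (lam beta : ℝ) (k : ℕ)
    (hden : (beta:ℂ) + lam * om N k ≠ 0) (t : ℝ) :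
    NormedSpace.exp (t • Bc N lam beta) *ᵥ Sum.elim (0 : Fin N → ℂ) (wv N k)
      = Fv N lam beta k t := by
  rw [decomp N lam beta k, Matrix.mulVec_sub, Matrix.mulVec_smul,
      exp_mulVec_eigen _ _ _ (real_smul_eigen _ _ _ (Bc_mulVec_v1 hN lam beta k) t),
      exp_mulVec_eigen _ _ _ (real_smul_eigen _ _ _ (Bc_mulVec_v2 hN lam beta k hden) t),
      Fv, smul_smul]

lemma single_decomp {N : ℕ} (hN : 2 ≤ N) (j : Fin N) :
    (Pi.single (Sum.inr j) 1 : Idx N → ℂ)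
      = (N:ℂ)⁻¹ • ∑ k ∈ Finset.range N,
          (starRingEnd ℂ) (gam N k ^ (j:ℕ)) • Sum.elim (0 : Fin N → ℂ) (wv N k) := by
  have hN' : (N:ℂ) ≠ 0 := Nat.cast_ne_zero.mpr (by omega)
  funext i
  rcases i with i | i
  · simp
  · have := expand hN j i
    simp only [Pi.smul_apply, Finset.sum_apply, Pi.smul_apply, Sum.elim_inr, smul_eq_mul]
    rw [this]
    rcases eq_or_ne i j with rfl | hij
    · simp [Pi.single_apply, hN']
    · simp [Pi.single_apply, hij, fun h => hij (Sum.inr_injective h)]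

lemma map_exp_complex {N : ℕ} (M : Matrix (Idx N) (Idx N) ℝ) :
    (NormedSpace.exp M).map Complex.ofReal = NormedSpace.exp (M.map Complex.ofReal) := by
  letI : SeminormedRing (Matrix (Idx N) (Idx N) ℝ) := Matrix.linftyOpSemiNormedRing
  letI : NormedRing (Matrix (Idx N) (Idx N) ℝ) := Matrix.linftyOpNormedRing
  letI : NormedAlgebra ℝ (Matrix (Idx N) (Idx N) ℝ) := Matrix.linftyOpNormedAlgebra
  letI : SeminormedRing (Matrix (Idx N) (Idx N) ℂ) := Matrix.linftyOpSemiNormedRing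
  letI : NormedRing (Matrix (Idx N) (Idx N) ℂ) := Matrix.linftyOpNormedRing
  letI : NormedAlgebra ℝ (Matrix (Idx N) (Idx N) ℂ) := Matrix.linftyOpNormedAlgebra
  letI : NormedAlgebra ℚ (Matrix (Idx N) (Idx N) ℝ) := Matrix.linftyOpNormedAlgebra
  letI : NormedAlgebra ℚ (Matrix (Idx N) (Idx N) ℂ) := Matrix.linftyOpNormedAlgebra
  let f : Matrix (Idx N) (Idx N) ℝ →+* Matrix (Idx N) (Idx N) ℂ :=
    Complex.ofRealHom.mapMatrix
  let L : Matrix (Idx N) (Idx N) ℝ →ₗ[ℝ] Matrix (Idx N) (Idx N) ℂ :=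
    { toFun := fun A => A.map Complex.ofReal
      map_add' := fun A B => by funext i j; simp
      map_smul' := fun r A => by funext i j; simp }
  have hf : Continuous f := L.continuous_of_finiteDimensional
  exact NormedSpace.map_exp f hf M

end Stmt8Aux

namespace Stmt8Aux

lemma exp_entry {N : ℕ} (hN : 2 ≤ N) (lam beta : ℝ)
    (hinv : ∀ k < N, (beta : ℂ) + lam * (gam N k - 1) ≠ 0) (t : ℝ) (i : Idx N) (j : Fin N) :
    NormedSpace.exp (t • blockBR N lam beta) i (Sum.inr j)
      = ((N:ℂ)⁻¹ * ∑ k ∈ Finset.range N,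
          (starRingEnd ℂ) (gam N k ^ (j:ℕ)) * Fv N lam beta k t i).re := by
  have hmap : (t • blockBR N lam beta).map Complex.ofReal = t • Bc N lam beta := by
    funext a b
    simp [Bc, Matrix.map_apply]
  have h1 : ((NormedSpace.exp (t • blockBR N lam beta)).map Complex.ofReal) i (Sum.inr j)
      = NormedSpace.exp (t • Bc N lam beta) i (Sum.inr j) := by
    rw [map_exp_complex, hmap]
  have hv : NormedSpace.exp (t • Bc N lam beta) *ᵥ (Pi.single (Sum.inr j) 1)
      = (N:ℂ)⁻¹ • ∑ k ∈ Finset.range N,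
          (starRingEnd ℂ) (gam N k ^ (j:ℕ)) • Fv N lam beta k t := by
    rw [single_decomp hN j, Matrix.mulVec_smul]
    congr 1
    rw [← Matrix.mulVecLin_apply, map_sum]
    refine Finset.sum_congr rfl fun k hk => ?_
    rw [Matrix.mulVecLin_apply, Matrix.mulVec_smul,
        exp_col hN lam beta k (hinv k (Finset.mem_range.mp hk)) t]
  have h3 : NormedSpace.exp (t • Bc N lam beta) i (Sum.inr j)
      = (NormedSpace.exp (t • Bc N lam beta) *ᵥ Pi.single (Sum.inr j) 1) i := by
    simp
  have h2 : NormedSpace.exp (t • Bc N lam beta) i (Sum.inr j)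
      = ((N:ℂ)⁻¹ * ∑ k ∈ Finset.range N,
          (starRingEnd ℂ) (gam N k ^ (j:ℕ)) * Fv N lam beta k t i) := by
    rw [h3, hv]
    simp [Finset.sum_apply, Finset.mul_sum]
  have h0 : NormedSpace.exp (t • blockBR N lam beta) i (Sum.inr j)
      = (((NormedSpace.exp (t • blockBR N lam beta)).map Complex.ofReal) i (Sum.inr j)).re := by
    simp [Matrix.map_apply]
  rw [h0, h1, h2]

end Stmt8Aux

namespace Stmt8Aux

lemma gam_eqI (N k : ℕ) : gam N k = Complex.exp (((2*Real.pi*k/N : ℝ) : ℂ) * Complex.I) := by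
  rw [gam]
  congr 1
  push_cast
  ring

lemma norm_gam (N k : ℕ) : ‖gam N k‖ = 1 := by
  rw [gam_eqI, Complex.norm_exp_ofReal_mul_I]

lemma norm_wv (N k : ℕ) (n : Fin N) : ‖wv N k n‖ = 1 := by
  rw [wv, norm_pow, norm_gam, one_pow]

lemma om_re (N k : ℕ) : (om N k).re = Real.cos (2*Real.pi*k/N) - 1 := by
  rw [om, gam_eqI, Complex.sub_re, Complex.exp_ofReal_mul_I_re]
  simp

lemma om_zero (N : ℕ) : om N 0 = 0 := by
  simp [om, gam]

lemma cf_zero (N : ℕ) (lam beta : ℝ) : cf N lam beta 0 = 0 := by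
  simp [cf, om_zero]

lemma norm_v1 (N k : ℕ) (i : Idx N) : ‖v1 N k i‖ ≤ 1 := by
  rcases i with i | i
  · simp only [v1, Sum.elim_inl]
    rw [norm_wv]
  · simp only [v1, Sum.elim_inr, Pi.zero_apply, norm_zero]
    exact zero_le_one

lemma norm_v2 (N : ℕ) (lam beta : ℝ) (k : ℕ) (i : Idx N) :
    ‖v2 N lam beta k i‖ ≤ ‖cf N lam beta k‖ + 1 := by
  have h0 : (0:ℝ) ≤ ‖cf N lam beta k‖ := norm_nonneg _
  rcases i with i | i
  · simp only [v2, Sum.elim_inl, Pi.smul_apply, smul_eq_mul]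
    rw [norm_mul, norm_wv, mul_one]
    linarith
  · simp only [v2, Sum.elim_inr]
    rw [norm_wv]
    linarith

lemma norm_cexp_neg_beta (beta t : ℝ) : ‖Complex.exp (-(beta:ℂ) * t)‖ = Real.exp (-beta * t) := by
  rw [Complex.norm_exp]
  congr 1
  simp

lemma norm_cexp_om (N k : ℕ) (lam t : ℝ) :
    ‖Complex.exp (((lam:ℂ) * om N k) * t)‖
      = Real.exp ((lam * (Real.cos (2*Real.pi*k/N) - 1)) * t) := by
  rw [Complex.norm_exp]
  congr 1
  rw [← om_re N k]
  simp [Complex.mul_re, Complex.ofReal_re, Complex.ofReal_im]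

lemma Fv_bound {N : ℕ} (hN : 2 ≤ N) {lam beta : ℝ} (hlam : 0 < lam) (hbeta : 0 < beta) {c : ℝ}
    (hc : 0 < c) (hcb : c ≤ beta)
    (hck : ∀ k, 0 < k → k < N → c ≤ lam * (1 - Real.cos (2*Real.pi*k/N)))
    {k : ℕ} (hk : k < N) {t : ℝ} (ht : 0 ≤ t) (i : Idx N) :
    ‖Fv N lam beta k t i‖ ≤ (2 * ‖cf N lam beta k‖ + 1) * Real.exp (-c * t) := by
  have hexp1 : Real.exp (-beta * t) ≤ Real.exp (-c * t) := by
    apply Real.exp_le_exp.mpr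
    nlinarith
  have h1 : ‖Complex.exp (-(beta:ℂ) * t) * v2 N lam beta k i‖
      ≤ (‖cf N lam beta k‖ + 1) * Real.exp (-c * t) := by
    rw [norm_mul, norm_cexp_neg_beta]
    calc Real.exp (-beta * t) * ‖v2 N lam beta k i‖
        ≤ Real.exp (-c * t) * (‖cf N lam beta k‖ + 1) := by
          apply mul_le_mul hexp1 (norm_v2 N lam beta k i) (norm_nonneg _) (Real.exp_pos _).le
      _ = (‖cf N lam beta k‖ + 1) * Real.exp (-c * t) := mul_comm _ _
  have h2 : ‖(cf N lam beta k * Complex.exp (((lam:ℂ) * om N k) * t)) * v1 N k i‖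
      ≤ ‖cf N lam beta k‖ * Real.exp (-c * t) := by
    rcases Nat.eq_zero_or_pos k with rfl | hk0
    · simp [cf_zero]
    · rw [norm_mul, norm_mul, norm_cexp_om]
      have hexp2 : Real.exp ((lam * (Real.cos (2*Real.pi*k/N) - 1)) * t) ≤ Real.exp (-c * t) := by
        apply Real.exp_le_exp.mpr
        have := hck k hk0 hk
        nlinarith
      have hv1 := norm_v1 N k i
      calc ‖cf N lam beta k‖ * Real.exp ((lam * (Real.cos (2*Real.pi*k/N) - 1)) * t) * ‖v1 N k i‖
          ≤ ‖cf N lam beta k‖ * Real.exp (-c * t) * 1 := by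
            gcongr
        _ = ‖cf N lam beta k‖ * Real.exp (-c * t) := mul_one _
  calc ‖Fv N lam beta k t i‖
      ≤ ‖Complex.exp (-(beta:ℂ) * t) * v2 N lam beta k i‖
        + ‖(cf N lam beta k * Complex.exp (((lam:ℂ) * om N k) * t)) * v1 N k i‖ := by
        rw [Fv]
        simp only [Pi.sub_apply, Pi.smul_apply, smul_eq_mul]
        exact norm_sub_le _ _
    _ ≤ (‖cf N lam beta k‖ + 1) * Real.exp (-c * t) + ‖cf N lam beta k‖ * Real.exp (-c * t) :=
        add_le_add h1 h2
    _ = (2 * ‖cf N lam beta k‖ + 1) * Real.exp (-c * t) := by ring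

end Stmt8Aux

namespace Stmt8Aux

lemma entry_bound {N : ℕ} (hN : 2 ≤ N) (lam beta : ℝ) (hlam : 0 < lam) (hbeta : 0 < beta)
    (hinv : ∀ k < N, (beta : ℂ) + lam * (gam N k - 1) ≠ 0) :
    ∃ c : ℝ, 0 < c ∧ ∃ C : ℝ, 0 ≤ C ∧ ∀ t : ℝ, 0 ≤ t → ∀ i : Idx N, ∀ j : Fin N,
      |NormedSpace.exp (t • blockBR N lam beta) i (Sum.inr j)| ≤ C * Real.exp (-c * t) := by
  have hNpos : (0:ℝ) < N := by
    have : (0:ℕ) < N := by omega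
    exact_mod_cast this
  have hne : (Finset.Ioo 0 N).Nonempty := ⟨1, Finset.mem_Ioo.mpr ⟨one_pos, by omega⟩⟩
  set c₁ := (Finset.Ioo 0 N).inf' hne (fun k => 1 - Real.cos (2*Real.pi*k/N)) with hc₁def
  have hc₁ : 0 < c₁ := by
    rw [hc₁def, Finset.lt_inf'_iff]
    intro k hk
    rw [Finset.mem_Ioo] at hk
    have hkpos : (0:ℝ) < k := by exact_mod_cast hk.1
    have hklt : (k:ℝ) < N := by exact_mod_cast hk.2
    have hpi := Real.pi_pos
    have hθpos : 0 < 2*Real.pi*k/N := by positivity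
    have hθlt : 2*Real.pi*k/N < 2*Real.pi := by
      rw [div_lt_iff₀ hNpos]
      nlinarith
    have hcos : Real.cos (2*Real.pi*k/N) < 1 := by
      have hle := Real.cos_le_one (2*Real.pi*k/N)
      rcases eq_or_lt_of_le hle with heq | h
      · exfalso
        have := (Real.cos_eq_one_iff_of_lt_of_lt (by linarith) hθlt).mp heq
        linarith
      · exact h
    linarith
  set c := min beta (lam * c₁) with hcdef
  have hc : 0 < c := lt_min hbeta (by positivity)
  refine ⟨c, hc, ?_⟩
  set C := ∑ k ∈ Finset.range N, (2 * ‖cf N lam beta k‖ + 1) with hCdef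
  have hC : 0 ≤ C := Finset.sum_nonneg fun k _ => by positivity
  refine ⟨C, hC, ?_⟩
  intro t ht i j
  rw [exp_entry hN lam beta hinv t i j]
  have hcb : c ≤ beta := min_le_left _ _
  have hck : ∀ k, 0 < k → k < N → c ≤ lam * (1 - Real.cos (2*Real.pi*k/N)) := by
    intro k hk0 hkN
    refine le_trans (min_le_right _ _) ?_
    apply mul_le_mul_of_nonneg_left _ hlam.le
    exact Finset.inf'_le _ (Finset.mem_Ioo.mpr ⟨hk0, hkN⟩)
  have hfb : ∀ k ∈ Finset.range N,
      ‖(starRingEnd ℂ) (gam N k ^ (j:ℕ)) * Fv N lam beta k t i‖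
        ≤ (2 * ‖cf N lam beta k‖ + 1) * Real.exp (-c * t) := by
    intro k hk
    rw [norm_mul]
    have h1 : ‖(starRingEnd ℂ) (gam N k ^ (j:ℕ))‖ = 1 := by
      rw [RingHomIsometric.norm_map]
      rw [norm_pow, norm_gam, one_pow]
    rw [h1, one_mul]
    exact Fv_bound hN hlam hbeta hc hcb hck (Finset.mem_range.mp hk) ht i
  have hsum : ‖∑ k ∈ Finset.range N,
      (starRingEnd ℂ) (gam N k ^ (j:ℕ)) * Fv N lam beta k t i‖ ≤ C * Real.exp (-c * t) := by
    refine le_trans (norm_sum_le _ _) ?_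
    rw [hCdef, Finset.sum_mul]
    exact Finset.sum_le_sum hfb
  have hNinv : ‖((N:ℂ))⁻¹‖ ≤ 1 := by
    rw [norm_inv]
    rw [Complex.norm_natCast]
    rw [inv_le_one_iff₀]
    right
    exact_mod_cast (by omega : 1 ≤ N)
  calc |((N:ℂ)⁻¹ * ∑ k ∈ Finset.range N,
          (starRingEnd ℂ) (gam N k ^ (j:ℕ)) * Fv N lam beta k t i).re|
      ≤ ‖(N:ℂ)⁻¹ * ∑ k ∈ Finset.range N,
          (starRingEnd ℂ) (gam N k ^ (j:ℕ)) * Fv N lam beta k t i‖ := by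
        exact Complex.abs_re_le_norm _
    _ = ‖((N:ℂ))⁻¹‖ * ‖∑ k ∈ Finset.range N,
          (starRingEnd ℂ) (gam N k ^ (j:ℕ)) * Fv N lam beta k t i‖ := norm_mul _ _
    _ ≤ 1 * (C * Real.exp (-c * t)) := by
        apply mul_le_mul hNinv hsum (norm_nonneg _) zero_le_one
    _ = C * Real.exp (-c * t) := one_mul _

lemma entry_continuous {N : ℕ} (hN : 2 ≤ N) (lam beta : ℝ)
    (hinv : ∀ k < N, (beta : ℂ) + lam * (gam N k - 1) ≠ 0) (i : Idx N) (j : Fin N) :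
    Continuous fun t : ℝ => NormedSpace.exp (t • blockBR N lam beta) i (Sum.inr j) := by
  have heq : (fun t : ℝ => NormedSpace.exp (t • blockBR N lam beta) i (Sum.inr j))
      = fun t => ((N:ℂ)⁻¹ * ∑ k ∈ Finset.range N,
          (starRingEnd ℂ) (gam N k ^ (j:ℕ)) * Fv N lam beta k t i).re :=
    funext fun t => exp_entry hN lam beta hinv t i j
  rw [heq]
  apply Complex.continuous_re.comp
  apply Continuous.mul continuous_const
  apply continuous_finset_sum
  intro k _
  apply Continuous.mul continuous_const
  have : (fun t : ℝ => Fv N lam beta k t i)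
      = fun t : ℝ => Complex.exp (-(beta:ℂ) * t) * v2 N lam beta k i
          - (cf N lam beta k * Complex.exp (((lam:ℂ) * om N k) * t)) * v1 N k i := by
    funext t
    simp [Fv]
  rw [this]
  apply Continuous.sub
  · apply Continuous.mul _ continuous_const
    exact Complex.continuous_exp.comp (continuous_const.mul Complex.continuous_ofReal)
  · apply Continuous.mul _ continuous_const
    apply Continuous.mul continuous_const
    exact Complex.continuous_exp.comp (continuous_const.mul Complex.continuous_ofReal)

end Stmt8Aux

namespace Stmt8Aux

lemma prod_entry (N : ℕ) (lam beta σ : ℝ) (t : ℝ) (i i' : Idx N) :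
    (NormedSpace.exp (t • blockBR N lam beta) * blockG N σ * (blockG N σ)ᵀ *
      NormedSpace.exp (t • (blockBR N lam beta)ᵀ)) i i'
      = ∑ j : Fin N, (σ * NormedSpace.exp (t • blockBR N lam beta) i (Sum.inr j)) *
          (σ * NormedSpace.exp (t • blockBR N lam beta) i' (Sum.inr j)) := by
  set E := NormedSpace.exp (t • blockBR N lam beta) with hE
  have hT : NormedSpace.exp (t • (blockBR N lam beta)ᵀ) = Eᵀ := by
    rw [hE, ← Matrix.transpose_smul, Matrix.exp_transpose]
  have hEGr : ∀ (a : Idx N) (b : Fin N),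
      (E * blockG N σ) a (Sum.inr b) = E a (Sum.inr b) * σ := by
    intro a b
    rw [blockG, Matrix.mul_apply, Fintype.sum_sum_type]
    simp [Matrix.one_apply, mul_ite, Finset.sum_ite_eq', mul_comm]
  have hEGl : ∀ (a : Idx N) (b : Fin N), (E * blockG N σ) a (Sum.inl b) = 0 := by
    intro a b
    rw [blockG, Matrix.mul_apply, Fintype.sum_sum_type]
    simp
  have hassoc : E * blockG N σ * (blockG N σ)ᵀ * Eᵀ
      = (E * blockG N σ) * (E * blockG N σ)ᵀ := by
    rw [Matrix.mul_assoc, Matrix.transpose_mul]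
  rw [hT, hassoc, Matrix.mul_apply, Fintype.sum_sum_type]
  simp only [Matrix.transpose_apply, hEGl, hEGr, zero_mul, Finset.sum_const_zero, zero_add]
  refine Finset.sum_congr rfl fun b _ => by ring

end Stmt8Aux


open Stmt8Aux

/-- under β + λω_k ≠ 0 for all k, the integral
∫_0^∞ |⟨p, e^{tB} G Gᵀ e^{tBᵀ} q⟩| dt is finite for all p, q ∈ ℝ^{2N}; consequently the
matrix Σ(∞) = ∫_0^∞ e^{tB} G Gᵀ e^{tBᵀ} dt is well-defined (entrywise integrable). -/
theorem stmt8 (N : ℕ) (hN : 2 ≤ N) (lam beta σ : ℝ) (hlam : 0 < lam) (hbeta : 0 < beta)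
    (hinv : ∀ k < N, (beta : ℂ) + lam * (gam N k - 1) ≠ 0) :
    (∀ p q : Fin N ⊕ Fin N → ℝ,
      IntegrableOn
        (fun t : ℝ => |p ⬝ᵥ ((NormedSpace.exp (t • blockBR N lam beta) * blockG N σ *
          (blockG N σ)ᵀ * NormedSpace.exp (t • (blockBR N lam beta)ᵀ)).mulVec q)|)
        (Set.Ici 0)) ∧
    (∀ i j : Fin N ⊕ Fin N,
      IntegrableOn
        (fun t : ℝ => (NormedSpace.exp (t • blockBR N lam beta) * blockG N σ *
          (blockG N σ)ᵀ * NormedSpace.exp (t • (blockBR N lam beta)ᵀ)) i j)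
        (Set.Ici 0)) := by
  obtain ⟨c, hc, C, hC, hbound⟩ := entry_bound hN lam beta hlam hbeta hinv
  have hEcont : ∀ (i : Idx N) (j : Fin N),
      Continuous fun t : ℝ => NormedSpace.exp (t • blockBR N lam beta) i (Sum.inr j) :=
    entry_continuous hN lam beta hinv
  have key : ∀ i j : Idx N,
      IntegrableOn
        (fun t : ℝ => (NormedSpace.exp (t • blockBR N lam beta) * blockG N σ *
          (blockG N σ)ᵀ * NormedSpace.exp (t • (blockBR N lam beta)ᵀ)) i j)
        (Set.Ici 0) := by
    intro i i'
    have hMeq : (fun t : ℝ => (NormedSpace.exp (t • blockBR N lam beta) * blockG N σ *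
          (blockG N σ)ᵀ * NormedSpace.exp (t • (blockBR N lam beta)ᵀ)) i i')
        = fun t => ∑ j : Fin N,
            (σ * NormedSpace.exp (t • blockBR N lam beta) i (Sum.inr j)) *
            (σ * NormedSpace.exp (t • blockBR N lam beta) i' (Sum.inr j)) :=
      funext fun t => prod_entry N lam beta σ t i i'
    rw [hMeq]
    have hcont : Continuous fun t : ℝ => ∑ j : Fin N,
        (σ * NormedSpace.exp (t • blockBR N lam beta) i (Sum.inr j)) *
        (σ * NormedSpace.exp (t • blockBR N lam beta) i' (Sum.inr j)) := by
      apply continuous_finset_sum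
      intro j _
      exact ((continuous_const.mul (hEcont i j)).mul (continuous_const.mul (hEcont i' j)))
    have hg : IntegrableOn (fun t : ℝ => ((N:ℝ) * (σ^2 * C^2)) * Real.exp (-c * t))
        (Set.Ici 0) := by
      rw [integrableOn_Ici_iff_integrableOn_Ioi]
      exact (exp_neg_integrableOn_Ioi 0 hc).const_mul _
    apply Integrable.mono' hg hcont.aestronglyMeasurable
    filter_upwards [MeasureTheory.ae_restrict_mem measurableSet_Ici] with t ht
    rw [Real.norm_eq_abs]
    have ht0 : (0:ℝ) ≤ t := ht
    have he1 : Real.exp (-c * t) ≤ 1 := by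
      rw [Real.exp_le_one_iff]
      nlinarith
    have hterm : ∀ j : Fin N,
        |(σ * NormedSpace.exp (t • blockBR N lam beta) i (Sum.inr j)) *
          (σ * NormedSpace.exp (t • blockBR N lam beta) i' (Sum.inr j))|
          ≤ (σ^2 * C^2) * Real.exp (-c * t) := by
      intro j
      have hx := hbound t ht i j
      have hy := hbound t ht i' j
      have hxa : 0 ≤ |NormedSpace.exp (t • blockBR N lam beta) i (Sum.inr j)| := abs_nonneg _
      have hya : 0 ≤ |NormedSpace.exp (t • blockBR N lam beta) i' (Sum.inr j)| := abs_nonneg _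
      have hep := Real.exp_pos (-c * t)
      rw [abs_mul, abs_mul, abs_mul]
      calc |σ| * |NormedSpace.exp (t • blockBR N lam beta) i (Sum.inr j)| *
            (|σ| * |NormedSpace.exp (t • blockBR N lam beta) i' (Sum.inr j)|)
          ≤ |σ| * (C * Real.exp (-c * t)) * (|σ| * (C * Real.exp (-c * t))) := by
            apply mul_le_mul _ _ (by positivity) (by positivity)
            · exact mul_le_mul_of_nonneg_left hx (abs_nonneg σ)
            · exact mul_le_mul_of_nonneg_left hy (abs_nonneg σ)
        _ = (σ^2 * C^2) * (Real.exp (-c * t) * Real.exp (-c * t)) := by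
            rw [← _root_.sq_abs σ]
            ring
        _ ≤ (σ^2 * C^2) * (1 * Real.exp (-c * t)) := by
            apply mul_le_mul_of_nonneg_left _ (by positivity)
            exact mul_le_mul_of_nonneg_right he1 hep.le
        _ = (σ^2 * C^2) * Real.exp (-c * t) := by rw [one_mul]
    calc |∑ j : Fin N,
          (σ * NormedSpace.exp (t • blockBR N lam beta) i (Sum.inr j)) *
          (σ * NormedSpace.exp (t • blockBR N lam beta) i' (Sum.inr j))|
        ≤ ∑ j : Fin N,
          |(σ * NormedSpace.exp (t • blockBR N lam beta) i (Sum.inr j)) *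
          (σ * NormedSpace.exp (t • blockBR N lam beta) i' (Sum.inr j))| :=
          Finset.abs_sum_le_sum_abs _ _
      _ ≤ ∑ _j : Fin N, (σ^2 * C^2) * Real.exp (-c * t) :=
          Finset.sum_le_sum fun j _ => hterm j
      _ = (N:ℝ) * ((σ^2 * C^2) * Real.exp (-c * t)) := by
          rw [Finset.sum_const, Finset.card_univ, Fintype.card_fin, nsmul_eq_mul]
      _ = ((N:ℝ) * (σ^2 * C^2)) * Real.exp (-c * t) := by ring
  refine ⟨?_, key⟩
  intro p q
  have : (fun t : ℝ => |p ⬝ᵥ ((NormedSpace.exp (t • blockBR N lam beta) * blockG N σ *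
          (blockG N σ)ᵀ * NormedSpace.exp (t • (blockBR N lam beta)ᵀ)).mulVec q)|)
      = fun t : ℝ => |∑ i : Idx N, p i * ∑ j : Idx N,
          (NormedSpace.exp (t • blockBR N lam beta) * blockG N σ *
          (blockG N σ)ᵀ * NormedSpace.exp (t • (blockBR N lam beta)ᵀ)) i j * q j| := by
    funext t
    simp [dotProduct, Matrix.mulVec]
  rw [this]
  apply Integrable.abs
  apply MeasureTheory.integrable_finset_sum
  intro i _
  apply Integrable.const_mul
  apply MeasureTheory.integrable_finset_sum
  intro j _
  exact (key i j).mul_const _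
end
end

section
/- For every λ > 0, the matrix e^{λAt} A converges to the zero matrix as t → ∞. -/
open Matrix Filter

noncomputable section

namespace Stmt9Aux

/-- primitive N-th root of unity -/
def ω (N : ℕ) : ℂ := Complex.exp (2 * Real.pi * Complex.I / N)

/-- cyclic permutation matrix -/
def Pc (N : ℕ) : Matrix (Fin N) (Fin N) ℂ :=
  fun n m => if (m : ℕ) = ((n : ℕ) + 1) % N then (1 : ℂ) else 0

/-- DFT matrix -/
def Uc (N : ℕ) : Matrix (Fin N) (Fin N) ℂ := fun n k => ω N ^ ((n : ℕ) * (k : ℕ))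

/-- diagonalized form of `Pc - 1` -/
def Bc (N : ℕ) : Matrix (Fin N) (Fin N) ℂ :=
  Matrix.diagonal (fun k : Fin N => ω N ^ (k : ℕ) - 1)

variable {N : ℕ}

lemma hω (hN : N ≠ 0) : IsPrimitiveRoot (ω N) N := Complex.isPrimitiveRoot_exp N hN

lemma omega_pow_mod (hN : N ≠ 0) (a : ℕ) : ω N ^ (a % N) = ω N ^ a :=
  (pow_eq_pow_mod a (hω hN).pow_eq_one).symm

lemma succ_mod_ne (hN : 2 ≤ N) (n : Fin N) : ((n : ℕ) + 1) % N ≠ (n : ℕ) := by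
  intro h
  rcases lt_or_ge ((n : ℕ) + 1) N with h1 | h1
  · rw [Nat.mod_eq_of_lt h1] at h; omega
  · have h2 : (n : ℕ) + 1 = N := by have := n.isLt; omega
    rw [h2, Nat.mod_self] at h; omega

lemma map_ringMat (hN : 2 ≤ N) :
    (ringMat N).map (Complex.ofReal) = Pc N - 1 := by
  have hs : ∀ n : Fin N, ¬ ((n : ℕ) = ((n : ℕ) + 1) % N) :=
    fun n h => succ_mod_ne hN n h.symm
  ext n m
  simp only [map_apply, ringMat, Pc, Matrix.sub_apply, Matrix.one_apply]
  by_cases h1 : (m : ℕ) = (n : ℕ)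
  · have hm : m = n := Fin.ext h1
    subst hm
    simp [hs m]
  · have hm : ¬ n = m := fun h => h1 (by rw [h])
    by_cases h2 : (m : ℕ) = ((n : ℕ) + 1) % N <;>
      simp [h1, hm, h2, succ_mod_ne hN n]

lemma map_mul_ofReal (X Y : Matrix (Fin N) (Fin N) ℝ) :
    (X * Y).map Complex.ofReal = X.map Complex.ofReal * Y.map Complex.ofReal := by
  exact Matrix.map_mul (L := X) (M := Y) (f := Complex.ofRealHom)

lemma key (hN : 2 ≤ N) : (Pc N - 1) * Uc N = Uc N * Bc N := by
  have hN0 : N ≠ 0 := by omega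
  ext n k
  have hlt : ((n : ℕ) + 1) % N < N := Nat.mod_lt _ (by omega)
  set n' : Fin N := ⟨((n : ℕ) + 1) % N, hlt⟩ with hn'
  have hP : (Pc N * Uc N) n k = Uc N n' k := by
    rw [mul_apply]
    rw [Finset.sum_eq_single n']
    · simp [Pc, hn']
    · intro m _ hm
      have : ¬ (m : ℕ) = ((n : ℕ) + 1) % N := by
        intro h; exact hm (Fin.ext h)
      simp [Pc, this]
    · intro h; exact absurd (Finset.mem_univ n') h
  have hU : Uc N n' k = ω N ^ (((n : ℕ) + 1) * (k : ℕ)) := by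
    show ω N ^ ((((n : ℕ) + 1) % N) * (k : ℕ)) = _
    rw [← omega_pow_mod hN0 ((((n : ℕ) + 1) % N) * (k : ℕ)), Nat.mod_mul_mod,
      omega_pow_mod hN0]
  rw [sub_mul, one_mul]
  rw [Bc, Matrix.sub_apply, hP, hU, mul_diagonal]
  simp only [Uc]
  rw [add_mul, one_mul, pow_add, mul_sub, mul_one]

lemma det_Uc_ne_zero (hN : 2 ≤ N) : (Uc N).det ≠ 0 := by
  have hN0 : N ≠ 0 := by omega
  have hUc : Uc N = Matrix.vandermonde (fun i : Fin N => ω N ^ (i : ℕ)) := by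
    ext i j
    simp [Uc, Matrix.vandermonde_apply, ← pow_mul]
  rw [hUc, Matrix.det_vandermonde_ne_zero_iff]
  intro i j h
  exact Fin.ext ((hω hN0).pow_inj i.isLt j.isLt h)

/-- mapping the exponential through `ofReal` entrywise -/
lemma map_exp_mat (M : Matrix (Fin N) (Fin N) ℝ) :
    (NormedSpace.exp M).map Complex.ofReal
      = NormedSpace.exp (M.map Complex.ofReal) := by
  letI : SeminormedRing (Matrix (Fin N) (Fin N) ℝ) := Matrix.linftyOpSemiNormedRing
  letI : NormedRing (Matrix (Fin N) (Fin N) ℝ) := Matrix.linftyOpNormedRing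
  letI : NormedAlgebra ℝ (Matrix (Fin N) (Fin N) ℝ) := Matrix.linftyOpNormedAlgebra
  letI : SeminormedRing (Matrix (Fin N) (Fin N) ℂ) := Matrix.linftyOpSemiNormedRing
  letI : NormedRing (Matrix (Fin N) (Fin N) ℂ) := Matrix.linftyOpNormedRing
  letI : NormedAlgebra ℝ (Matrix (Fin N) (Fin N) ℂ) := Matrix.linftyOpNormedAlgebra
  letI : NormedAlgebra ℂ (Matrix (Fin N) (Fin N) ℂ) := Matrix.linftyOpNormedAlgebra
  letI : NormedAlgebra ℚ (Matrix (Fin N) (Fin N) ℝ) := Matrix.linftyOpNormedAlgebra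
  letI : NormedAlgebra ℚ (Matrix (Fin N) (Fin N) ℂ) := Matrix.linftyOpNormedAlgebra
  have h1 : Complex.ofRealHom.mapMatrix (NormedSpace.exp M)
      = NormedSpace.exp (Complex.ofRealHom.mapMatrix M) :=
    NormedSpace.map_exp (Complex.ofRealHom.mapMatrix)
      (continuous_id.matrix_map Complex.continuous_ofReal) M
  have h2 : NormedSpace.exp (Complex.ofRealHom.mapMatrix M)
      = NormedSpace.exp (Complex.ofRealHom.mapMatrix M) :=
    rfl
  exact h1.trans h2

lemma re_lt_one (hN : 2 ≤ N) {k : Fin N} (hk : (k : ℕ) ≠ 0) :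
    (ω N ^ (k : ℕ)).re < 1 := by
  have hN0 : N ≠ 0 := by omega
  have habs : ‖ω N ^ (k : ℕ)‖ = 1 := by
    rw [norm_pow]
    have : ‖ω N‖ = 1 := by
      rw [ω, Complex.norm_exp]
      have h0 : (2 * Real.pi * Complex.I / N).re = 0 := by
        simp [Complex.div_re]
      rw [h0, Real.exp_zero]
    rw [this, one_pow]
  have hle : (ω N ^ (k : ℕ)).re ≤ 1 := habs ▸ Complex.re_le_norm _
  rcases lt_or_eq_of_le hle with h | h
  · exact h
  · exfalso
    have him : (ω N ^ (k : ℕ)).im = 0 := by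
      have h2 := Complex.sq_norm (ω N ^ (k : ℕ))
      rw [habs, Complex.normSq_apply, h] at h2
      nlinarith [sq_nonneg ((ω N ^ (k : ℕ)).im)]
    have hone : ω N ^ (k : ℕ) = 1 := by
      apply Complex.ext <;> simp [h, him]
    exact (hω hN0).pow_ne_one_of_pos_of_lt hk k.isLt hone

lemma tendsto_diag_entry (hN : 2 ≤ N) (lam : ℝ) (hlam : 0 < lam) (k : Fin N) :
    Tendsto (fun t : ℝ => Complex.exp (((t * lam : ℝ) : ℂ) * (ω N ^ (k : ℕ) - 1))
        * (ω N ^ (k : ℕ) - 1)) atTop (nhds 0) := by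
  by_cases hk : (k : ℕ) = 0
  · simp [hk]
  · set c : ℂ := ω N ^ (k : ℕ) - 1 with hc
    have hre : c.re < 0 := by
      have := re_lt_one hN hk
      simp only [hc, Complex.sub_re, Complex.one_re]
      linarith
    rw [tendsto_zero_iff_norm_tendsto_zero]
    have hnorm : ∀ t : ℝ, ‖Complex.exp (((t * lam : ℝ) : ℂ) * c) * c‖
        = Real.exp (t * lam * c.re) * ‖c‖ := by
      intro t
      rw [norm_mul, Complex.norm_exp,
        Complex.re_ofReal_mul]
    simp only [hnorm]
    have h1 : Tendsto (fun t : ℝ => t * lam * c.re) atTop atBot := by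
      have h2 : Tendsto (fun t : ℝ => t * (lam * c.re)) atTop atBot :=
        tendsto_id.atTop_mul_const_of_neg (by nlinarith)
      simpa [mul_assoc] using h2
    have h3 : Tendsto (fun t : ℝ => Real.exp (t * lam * c.re)) atTop (nhds 0) :=
      Real.tendsto_exp_atBot.comp h1
    simpa using h3.mul_const ‖c‖

end Stmt9Aux

open Stmt9Aux in
/-- for every λ > 0, e^{λAt} A → 0 as t → ∞. -/
theorem stmt9 (N : ℕ) (hN : 2 ≤ N) (lam : ℝ) (hlam : 0 < lam) :
    Tendsto (fun t : ℝ => NormedSpace.exp (t • (lam • ringMat N)) * ringMat N)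
      atTop (nhds 0) := by
  have hN0 : N ≠ 0 := by omega
  set Ac : Matrix (Fin N) (Fin N) ℂ := Pc N - 1 with hAc
  have hUdet : IsUnit (Uc N).det := (det_Uc_ne_zero hN).isUnit
  set u : (Matrix (Fin N) (Fin N) ℂ)ˣ := (Uc N).nonsingInvUnit hUdet with hu
  obtain ⟨V, hV⟩ : ∃ V, V = ((u : Matrix (Fin N) (Fin N) ℂ)) := ⟨_, rfl⟩
  obtain ⟨W, hW⟩ : ∃ W, W = (((u⁻¹ : (Matrix (Fin N) (Fin N) ℂ)ˣ)) :
    Matrix (Fin N) (Fin N) ℂ) := ⟨_, rfl⟩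
  have hVW : V * W = 1 := by rw [hV, hW]; exact u.mul_inv
  have hWV : W * V = 1 := by rw [hV, hW]; exact u.inv_mul
  have hVU : V = Uc N := by rw [hV]; rfl
  have hconj : Ac = V * Bc N * W := by
    have h1 : Ac * V = V * Bc N := by rw [hVU, hAc]; exact key hN
    calc Ac = Ac * (V * W) := by rw [hVW, mul_one]
      _ = (Ac * V) * W := by rw [mul_assoc]
      _ = V * Bc N * W := by rw [h1]
  -- entrywise reduction
  refine tendsto_pi_nhds.mpr ?_
  intro n
  rw [tendsto_pi_nhds]
  intro m
  -- the complexified function tends to zero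
  have hG : Tendsto (fun t : ℝ =>
      V * Matrix.diagonal (fun k : Fin N =>
          Complex.exp (((t * lam : ℝ) : ℂ) * (ω N ^ (k : ℕ) - 1)) * (ω N ^ (k : ℕ) - 1))
        * W) atTop (nhds 0) := by
    have hD : Tendsto (fun t : ℝ => Matrix.diagonal (fun k : Fin N =>
        Complex.exp (((t * lam : ℝ) : ℂ) * (ω N ^ (k : ℕ) - 1)) * (ω N ^ (k : ℕ) - 1)))
        atTop (nhds (0 : Matrix (Fin N) (Fin N) ℂ)) := by
      refine tendsto_pi_nhds.mpr ?_
      intro i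
      rw [tendsto_pi_nhds]
      intro j
      by_cases hij : i = j
      · subst hij
        simpa [Matrix.diagonal_apply_eq] using tendsto_diag_entry hN lam hlam i
      · simpa [Matrix.diagonal_apply_ne _ hij] using
          (tendsto_const_nhds : Tendsto (fun _ : ℝ => (0 : ℂ)) atTop (nhds 0))
    have h4 := ((tendsto_const_nhds : Tendsto (fun _ : ℝ => V) atTop (nhds V)).mul hD).mul
      (tendsto_const_nhds : Tendsto (fun _ : ℝ => W) atTop (nhds W))
    simpa using h4
  -- identify the complexified function with the original one
  have hkey : ∀ t : ℝ,
      ((NormedSpace.exp (t • (lam • ringMat N)) * ringMat N).map Complex.ofReal)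
      = V * Matrix.diagonal (fun k : Fin N =>
          Complex.exp (((t * lam : ℝ) : ℂ) * (ω N ^ (k : ℕ) - 1)) * (ω N ^ (k : ℕ) - 1))
        * W := by
    intro t
    have hmap_smul : (t • (lam • ringMat N)).map Complex.ofReal
        = ((t * lam : ℝ) : ℂ) • Ac := by
      rw [hAc, ← map_ringMat hN]
      ext i j
      simp [Matrix.map_apply, Matrix.smul_apply, Complex.ofReal_mul, mul_assoc]
    have hsmul_conj : ((t * lam : ℝ) : ℂ) • Ac
        = V * (((t * lam : ℝ) : ℂ) • Bc N) * W := by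
      simp only [hconj, mul_smul_comm, smul_mul_assoc]
    have hdiagsmul : (((t * lam : ℝ) : ℂ) • Bc N)
        = Matrix.diagonal (fun k : Fin N =>
            ((t * lam : ℝ) : ℂ) * (ω N ^ (k : ℕ) - 1)) := by
      rw [Bc, ← Matrix.diagonal_smul]
      rfl
    have hexp : NormedSpace.exp (((t * lam : ℝ) : ℂ) • Ac)
        = V * Matrix.diagonal (fun k : Fin N =>
            Complex.exp (((t * lam : ℝ) : ℂ) * (ω N ^ (k : ℕ) - 1))) * W := by
      have hfun : NormedSpace.exp (fun k : Fin N =>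
          ((t * lam : ℝ) : ℂ) * (ω N ^ (k : ℕ) - 1))
          = fun k : Fin N =>
            Complex.exp (((t * lam : ℝ) : ℂ) * (ω N ^ (k : ℕ) - 1)) := by
        funext k
        exact (Pi.coe_exp _ k).trans (congrFun Complex.exp_eq_exp_ℂ _).symm
      rw [hsmul_conj, hV, hW]
      rw [Matrix.exp_units_conj u]
      rw [hdiagsmul, Matrix.exp_diagonal, hfun]
    calc ((NormedSpace.exp (t • (lam • ringMat N)) * ringMat N).map Complex.ofReal)
        = (NormedSpace.exp (t • (lam • ringMat N))).map Complex.ofReal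
            * (ringMat N).map Complex.ofReal := map_mul_ofReal _ _
      _ = NormedSpace.exp (((t * lam : ℝ) : ℂ) • Ac) * Ac := by
          rw [map_exp_mat, hmap_smul, map_ringMat hN, hAc]
      _ = (V * Matrix.diagonal (fun k : Fin N =>
            Complex.exp (((t * lam : ℝ) : ℂ) * (ω N ^ (k : ℕ) - 1))) * W)
            * (V * Bc N * W) := by rw [hexp, hconj]
      _ = V * (Matrix.diagonal (fun k : Fin N =>
            Complex.exp (((t * lam : ℝ) : ℂ) * (ω N ^ (k : ℕ) - 1))) * Bc N) * W := by
          have hWVx : ∀ x : Matrix (Fin N) (Fin N) ℂ, W * (V * x) = x := fun x => by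
            rw [← mul_assoc, hWV, one_mul]
          simp only [mul_assoc]
          rw [hWVx]
      _ = V * Matrix.diagonal (fun k : Fin N =>
            Complex.exp (((t * lam : ℝ) : ℂ) * (ω N ^ (k : ℕ) - 1)) * (ω N ^ (k : ℕ) - 1))
            * W := by
          rw [Bc, Matrix.diagonal_mul_diagonal]
  -- take the real part of the (n, m) entry
  have hentry : Tendsto (fun t : ℝ =>
      ((NormedSpace.exp (t • (lam • ringMat N)) * ringMat N).map Complex.ofReal) n m)
      atTop (nhds 0) := by
    simp only [hkey]
    exact (tendsto_pi_nhds.mp ((tendsto_pi_nhds.mp hG) n)) m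
  have hre := (Complex.continuous_re.tendsto 0).comp hentry
  have hsame : ∀ t : ℝ,
      (((NormedSpace.exp (t • (lam • ringMat N)) * ringMat N).map Complex.ofReal) n m).re
      = (NormedSpace.exp (t • (lam • ringMat N)) * ringMat N) n m := by
    intro t; simp [Matrix.map_apply]
  simp only [Function.comp_def, hsame] at hre
  simpa using hre
end
end
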